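/- arXiv:1810.02194 — 5 statements merged into one kernel-verified Lean document; each statement's English description precedes it below -/
import Mathlib

section
/- Every quantitative MPRS game has a Nash equilibrium in deterministic memoryless strategies: there exists a memoryless deterministic strategy profile σ̂ = (σ̂^1,...,σ̂^N) such that for every player n ∈ {1,...,N}, every initial state s₀ ∈ S, and every (possibly history-dependent) deterministic strategy σ^n of player n, Q^n(s₀, σ̂^n, σ̂^{-n}) ≥ Q^n(s₀, σ^n, σ̂^{-n}). -/
/-- A multi-player reachability/safety (MPRS) game on a finite vertex type `V`
with `N` players.  `succ v` is the (nonempty) set of out-neighbours of `v`,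
`owner v` is the player who moves at `v` (the partition `V = V₁ ∪ ... ∪ V_N`),
`target n` is player `n`'s nonempty target set `R_n`, `reacher n` tells whether
player `n` is a reacher (`true`) or an avoider (`false`), and `gamma` is the
discount factor. -/
structure MPRS (V : Type) [Fintype V] [DecidableEq V] (N : ℕ) where
  succ : V → Finset V
  succ_nonempty : ∀ v, (succ v).Nonempty
  owner : V → Fin N
  target : Fin N → Finset V
  target_nonempty : ∀ n, (target n).Nonempty
  reacher : Fin N → Bool
  gamma : ℝ
  gamma_pos : 0 < gamma
  gamma_lt_one : gamma < 1

namespace MPRS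

/-- A deterministic, possibly history-dependent strategy: given the list of past
states and the current vertex, choose a next vertex.  (`none` is the terminal
state `s̄`; a strategy is only ever consulted at non-target vertices owned by
the player, where it must choose an out-neighbour.) -/
abbrev Strat (V : Type) := List (Option V) → V → V

/-- A strategy is memoryless if it depends only on the current state. -/
def Memoryless {V : Type} (σ : Strat V) : Prop := ∀ h h' v, σ h v = σ h' v

variable {V : Type} [Fintype V] [DecidableEq V] {N : ℕ} (g : MPRS V N)

/-- The total target set `R = R₁ ∪ ... ∪ R_N`. -/
def totalTarget : Finset V := Finset.univ.biUnion g.target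

/-- Validity of a strategy for player `n`: at any history ending in a vertex
`v ∈ V_n \ R`, it chooses an out-neighbour of `v`. -/
def ValidStrat (n : Fin N) (σ : Strat V) : Prop :=
  ∀ (h : List (Option V)) (v : V), g.owner v = n → v ∉ g.totalTarget → σ h v ∈ g.succ v

/-- One step of the deterministic dynamics under profile `σ`, given past
history `h` and current state `s`.  From a target or terminal state the next
state is the terminal state `none`. -/
def step (σ : Fin N → Strat V) (h : List (Option V)) (s : Option V) : Option V :=
  match s with
  | none => none
  | some v => if v ∈ g.totalTarget then none else some (σ (g.owner v) h v)

/-- Auxiliary play function carrying the history. -/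
def playAux (g : MPRS V N) (σ : Fin N → Strat V) : ℕ → List (Option V) → Option V → Option V
  | 0, _, s => s
  | t + 1, h, s => playAux g σ t (h ++ [s]) (g.step σ h s)

/-- The induced play: `play σ s₀ t` is the state `s_t` of the unique play
determined by the profile `σ` and the initial state `s₀`. -/
def play (σ : Fin N → Strat V) (s₀ : Option V) (t : ℕ) : Option V :=
  g.playAux σ t [] s₀

/-- Player `n`'s turn payoff `q^n`. -/
def q (n : Fin N) : Option V → ℝ
  | none => 0
  | some v => if v ∈ g.target n then (if g.reacher n then 1 else -1) else 0

/-- Player `n`'s total quantitative payoff `Q^n(s₀, σ) = ∑ γ^t q^n(s_t)`. -/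
noncomputable def Q (n : Fin N) (s₀ : Option V) (σ : Fin N → Strat V) : ℝ :=
  ∑' t : ℕ, g.gamma ^ t * g.q n (g.play σ s₀ t)

/-- Player `n`'s qualitative payoff `Q̃^n(s₀, σ)`. -/
noncomputable def Qtil (n : Fin N) (s₀ : Option V) (σ : Fin N → Strat V) : ℝ :=
  if 0 < g.Q n s₀ σ then 1 else if g.Q n s₀ σ < 0 then -1 else 0

end MPRS

namespace MPRSNE
open MPRS

variable {V : Type} [Fintype V] [DecidableEq V] {N : ℕ}

/-- end `e` is "good" for player `n` (a reacher likes ends in its target,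
an avoider likes ends outside its target). -/
def Good (g : MPRS V N) (n : Fin N) (e : V) : Prop :=
  (e ∈ g.target n ↔ g.reacher n = true)

/-- condition for rule (a)/(b): some successor was labelled at the previous
round (time `r`) with an end that is good for the owner. -/
def Ab (g : MPRS V N) (r : ℕ) (L : V → Option (V × V × ℕ)) (v : V) : Prop :=
  ∃ x : V × V, x.1 ∈ g.succ v ∧ (∃ w, L x.1 = some (w, x.2, r)) ∧ Good g (g.owner v) x.2

/-- condition for rule (c): all successors are labelled; pick one of maximal time. -/
def Cc (g : MPRS V N) (L : V → Option (V × V × ℕ)) (v : V) : Prop :=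
  ∃ x : V × V × ℕ, x.1 ∈ g.succ v ∧ (∃ w, L x.1 = some (w, x.2.1, x.2.2)) ∧
    ∀ u ∈ g.succ v, ∃ w e t, L u = some (w, e, t) ∧ t ≤ x.2.2

open Classical in
noncomputable def labStep (g : MPRS V N) (r : ℕ) (L : V → Option (V × V × ℕ)) (v : V) :
    Option (V × V × ℕ) :=
  match L v with
  | some x => some x
  | none =>
    if hab : Ab g r L v then some (hab.choose.1, hab.choose.2, r + 1)
    else if hc : Cc g L v then some (hc.choose.1, hc.choose.2.1, r + 1)
    else none

noncomputable def lab (g : MPRS V N) : ℕ → V → Option (V × V × ℕ)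
  | 0 => fun v => if v ∈ g.totalTarget then some (v, v, 0) else none
  | r + 1 => fun v => labStep g r (lab g r) v

variable (g : MPRS V N)

lemma lab_zero (v : V) :
    lab g 0 v = if v ∈ g.totalTarget then some (v, v, 0) else none := rfl

lemma lab_succ (r : ℕ) (v : V) : lab g (r + 1) v = labStep g r (lab g r) v := rfl

lemma labStep_some {r : ℕ} {L : V → Option (V × V × ℕ)} {v : V} {x : V × V × ℕ}
    (h : L v = some x) : labStep g r L v = some x := by
  unfold labStep; rw [h]

lemma labStep_of_ab {r : ℕ} {L : V → Option (V × V × ℕ)} {v : V}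
    (h0 : L v = none) (hab : Ab g r L v) :
    ∃ u e, labStep g r L v = some (u, e, r + 1) ∧ u ∈ g.succ v ∧
      (∃ w, L u = some (w, e, r)) ∧ Good g (g.owner v) e := by
  unfold labStep
  rw [h0]
  simp only [dif_pos hab]
  exact ⟨hab.choose.1, hab.choose.2, rfl, hab.choose_spec.1, hab.choose_spec.2.1,
    hab.choose_spec.2.2⟩

lemma labStep_of_cc {r : ℕ} {L : V → Option (V × V × ℕ)} {v : V}
    (h0 : L v = none) (hc : Cc g L v) : ∃ x, labStep g r L v = some x := by
  unfold labStep
  rw [h0]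
  by_cases hab : Ab g r L v
  · simp only [dif_pos hab]; exact ⟨_, rfl⟩
  · simp only [dif_neg hab, dif_pos hc]; exact ⟨_, rfl⟩

/-- Structure of a newly created label. -/
lemma labStep_new {r : ℕ} {L : V → Option (V × V × ℕ)} {v : V} {x : V × V × ℕ}
    (h0 : L v = none) (h : labStep g r L v = some x) :
    x.2.2 = r + 1 ∧ x.1 ∈ g.succ v ∧
      ((∃ w, L x.1 = some (w, x.2.1, r)) ∧ Good g (g.owner v) x.2.1 ∨
        (∃ w t, L x.1 = some (w, x.2.1, t)) ∧ ¬ Ab g r L v ∧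
          ∀ u ∈ g.succ v, ∃ w e t, L u = some (w, e, t) ∧
            ∀ w' e' t', L x.1 = some (w', e', t') → t ≤ t') := by
  unfold labStep at h
  rw [h0] at h
  by_cases hab : Ab g r L v
  · rw [dif_pos hab] at h
    obtain ⟨hs, ⟨w, hw⟩, hg⟩ := hab.choose_spec
    cases h
    exact ⟨rfl, hs, Or.inl ⟨⟨w, hw⟩, hg⟩⟩
  · rw [dif_neg hab] at h
    by_cases hc : Cc g L v
    · rw [dif_pos hc] at h
      obtain ⟨hs, ⟨w, hw⟩, hmax⟩ := hc.choose_spec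
      cases h
      refine ⟨rfl, hs, Or.inr ⟨⟨w, _, hw⟩, hab, fun u hu => ?_⟩⟩
      obtain ⟨w', e', t', hu', ht'⟩ := hmax u hu
      refine ⟨w', e', t', hu', fun w'' e'' t'' h'' => ?_⟩
      rw [hw] at h''
      cases h''
      exact ht'
    · rw [dif_neg hc] at h; simp at h


lemma labStep_none_of {r : ℕ} {L : V → Option (V × V × ℕ)} {v : V}
    (h0 : L v = none) (hab : ¬ Ab g r L v) (hc : ¬ Cc g L v) :
    labStep g r L v = none := by
  unfold labStep
  rw [h0]
  rw [dif_neg hab, dif_neg hc]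

lemma labStep_none_elim {r : ℕ} {L : V → Option (V × V × ℕ)} {v : V}
    (h : labStep g r L v = none) (h0 : L v = none) : ¬ Ab g r L v ∧ ¬ Cc g L v := by
  constructor
  · intro hab
    obtain ⟨u, e, he, -⟩ := labStep_of_ab g h0 hab
    rw [h] at he; simp at he
  · intro hc
    obtain ⟨x, hx⟩ := labStep_of_cc g (r := r) h0 hc
    rw [h] at hx; simp at hx

lemma lab_mono {r : ℕ} {v : V} {x : V × V × ℕ} (h : lab g r v = some x) :
    ∀ k, lab g (r + k) v = some x := by
  intro k
  induction k with
  | zero => exact h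
  | succ k ih => rw [show r + (k+1) = (r + k) + 1 by ring, lab_succ]; exact labStep_some g ih

lemma lab_mono_le {r r' : ℕ} {v : V} {x : V × V × ℕ} (h : lab g r v = some x)
    (hr : r ≤ r') : lab g r' v = some x := by
  obtain ⟨k, rfl⟩ := Nat.exists_eq_add_of_le hr
  exact lab_mono g h k

lemma lab_time_le {r : ℕ} {v : V} {x : V × V × ℕ} (h : lab g r v = some x) :
    x.2.2 ≤ r := by
  induction r with
  | zero =>
    rw [lab_zero] at h
    split at h
    · cases h; exact le_refl 0
    · simp at h
  | succ r ih =>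
    rw [lab_succ] at h
    cases h0 : lab g r v with
    | some y =>
      rw [labStep_some g h0] at h
      cases h
      exact le_trans (ih h0) (Nat.le_succ r)
    | none =>
      exact le_of_eq (labStep_new g h0 h).1

lemma lab_uniq {r r' : ℕ} {v : V} {x y : V × V × ℕ}
    (h : lab g r v = some x) (h' : lab g r' v = some y) : x = y := by
  have h1 := lab_mono_le g h (le_max_left r r')
  have h2 := lab_mono_le g h' (le_max_right r r')
  rw [h1] at h2
  cases h2; rfl

lemma lab_self {r : ℕ} {v : V} {x : V × V × ℕ} (h : lab g r v = some x) :
    lab g x.2.2 v = some x := by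
  induction r with
  | zero =>
    have := lab_time_le g h
    simpa [Nat.le_zero.mp this] using h
  | succ r ih =>
    rw [lab_succ] at h
    cases h0 : lab g r v with
    | some y =>
      rw [labStep_some g h0] at h
      cases h
      exact ih h0
    | none =>
      have ht := (labStep_new g h0 h).1
      rw [ht, lab_succ]
      exact h

lemma lab_before {r : ℕ} {v : V} {x : V × V × ℕ} (h : lab g r v = some x)
    {r' : ℕ} (hr : r' < x.2.2) : lab g r' v = none := by
  cases h' : lab g r' v with
  | none => rfl
  | some y =>
    have := lab_uniq g h h'
    subst this
    exact absurd (lab_time_le g h') (not_le.mpr hr)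

lemma lab_stab {r : ℕ} (h : ∀ u, lab g (r + 1) u = lab g r u) :
    ∀ u, lab g (r + 2) u = lab g (r + 1) u := by
  intro v
  have hfe : lab g (r + 1) = lab g r := funext h
  cases h0 : lab g (r + 1) v with
  | some x =>
    rw [show r + 2 = (r+1) + 1 by ring, lab_succ]
    rw [labStep_some g h0]
  | none =>
    have h0' : lab g r v = none := by rw [← h v]; exact h0
    have hne := labStep_none_elim g (r := r) (by rw [← lab_succ]; exact h0) h0'
    rw [show r + 2 = (r+1) + 1 by ring, lab_succ, hfe]
    refine labStep_none_of g h0' ?_ hne.2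
    intro hab
    obtain ⟨x, hx, ⟨w, hw⟩, -⟩ := hab
    exact absurd (lab_time_le g hw) (by simp)

lemma lab_stab_succ {r : ℕ} (h : ∀ u, lab g (r + 1) u = lab g r u) :
    ∀ k u, lab g (r + k + 1) u = lab g (r + k) u := by
  intro k
  induction k with
  | zero => exact h
  | succ k ih => exact lab_stab g ih

lemma lab_stab_add {r : ℕ} (h : ∀ u, lab g (r + 1) u = lab g r u) :
    ∀ k u, lab g (r + k) u = lab g r u := by
  intro k
  induction k with
  | zero => intro u; rfl
  | succ k ih => intro u; exact (lab_stab_succ g h k u).trans (ih u)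

lemma exists_stable : ∃ r ≤ Fintype.card V, ∀ u, lab g (r + 1) u = lab g r u := by
  by_contra hc
  push_neg at hc
  have key : ∀ r, r ≤ Fintype.card V + 1 →
      r ≤ (Finset.univ.filter (fun v => (lab g r v).isSome)).card := by
    intro r
    induction r with
    | zero => intro _; exact Nat.zero_le _
    | succ r ih =>
      intro hr
      have hr' : r ≤ Fintype.card V := by omega
      obtain ⟨u, hu⟩ := hc r hr'
      have hu0 : lab g r u = none := by
        cases h0 : lab g r u with
        | none => rfl
        | some x => exact absurd (by rw [lab_succ, labStep_some g h0, h0]) hu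
      have hus : (lab g (r + 1) u).isSome := by
        cases h1 : lab g (r + 1) u with
        | none => rw [h1, hu0] at hu; exact absurd rfl hu
        | some x => rfl
      have hsub : (Finset.univ.filter (fun v => (lab g r v).isSome)) ⊂
          (Finset.univ.filter (fun v => (lab g (r + 1) v).isSome)) := by
        constructor
        · intro v hv
          simp only [Finset.mem_filter, Finset.mem_univ, true_and] at hv ⊢
          cases h0 : lab g r v with
          | none => rw [h0] at hv; exact absurd hv (by simp)
          | some x => rw [lab_succ, labStep_some g h0]; rfl
        · intro hsub'
          have := hsub' (Finset.mem_filter.mpr ⟨Finset.mem_univ u, hus⟩)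
          simp only [Finset.mem_filter, Finset.mem_univ, true_and, hu0] at this
          exact absurd this (by simp)
      calc r + 1 ≤ (Finset.univ.filter (fun v => (lab g r v).isSome)).card + 1 := by
            have := ih (by omega); omega
        _ ≤ (Finset.univ.filter (fun v => (lab g (r + 1) v).isSome)).card :=
            Nat.succ_le_of_lt (Finset.card_lt_card hsub)
  have h1 := key (Fintype.card V + 1) le_rfl
  have h2 : (Finset.univ.filter
      (fun v => (lab g (Fintype.card V + 1) v).isSome)).card ≤ Fintype.card V :=
    le_trans (Finset.card_filter_le _ _) (by simp)
  omega

lemma lab_final {r : ℕ} (hr : Fintype.card V + 1 ≤ r) (v : V) :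
    lab g r v = lab g (Fintype.card V + 1) v := by
  obtain ⟨r₀, hr₀, hst⟩ := exists_stable g
  have h1 : ∀ s, r₀ ≤ s → ∀ u, lab g s u = lab g r₀ u := by
    intro s hs u
    obtain ⟨k, rfl⟩ := Nat.exists_eq_add_of_le hs
    exact lab_stab_add g hst k u
  rw [h1 r (by omega) v, h1 (Fintype.card V + 1) (by omega) v]

/-- The final (stabilized) labelling. -/
noncomputable def fl (v : V) : Option (V × V × ℕ) := lab g (Fintype.card V + 1) v

lemma lab_to_fl {r : ℕ} {v : V} {x : V × V × ℕ} (h : lab g r v = some x) :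
    fl g v = some x := by
  unfold fl
  rcases le_or_gt r (Fintype.card V + 1) with hr | hr
  · exact lab_mono_le g h hr
  · rw [← lab_final g (le_of_lt hr) v]; exact h

lemma fl_none_all {v : V} (h : fl g v = none) (r : ℕ) : lab g r v = none := by
  cases h0 : lab g r v with
  | none => rfl
  | some x => rw [lab_to_fl g h0] at h; simp at h


lemma mem_totalTarget {v : V} {n : Fin N} (h : v ∈ g.target n) : v ∈ g.totalTarget :=
  Finset.mem_biUnion.mpr ⟨n, Finset.mem_univ n, h⟩

lemma lab_R {v : V} (h : v ∈ g.totalTarget) (r : ℕ) : lab g r v = some (v, v, 0) :=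
  lab_mono_le g (by rw [lab_zero, if_pos h]) (Nat.zero_le r)

lemma fl_R {v : V} (h : v ∈ g.totalTarget) : fl g v = some (v, v, 0) := lab_R g h _

lemma fl_time_zero {v : V} {x : V × V × ℕ} (h : fl g v = some x) (ht : x.2.2 = 0) :
    v ∈ g.totalTarget ∧ x = (v, v, 0) := by
  have hs := lab_self g (r := Fintype.card V + 1) h
  rw [ht, lab_zero] at hs
  split at hs
  · cases hs; exact ⟨by assumption, rfl⟩
  · simp at hs

lemma fl_notR {v : V} {x : V × V × ℕ} (h : fl g v = some x) (hR : v ∉ g.totalTarget) :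
    1 ≤ x.2.2 := by
  rcases Nat.eq_zero_or_pos x.2.2 with h0 | h0
  · exact absurd (fl_time_zero g h h0).1 hR
  · exact h0

lemma cc_of_all {L : V → Option (V × V × ℕ)} {v : V}
    (hall : ∀ u ∈ g.succ v, ∃ x, L u = some x) : Cc g L v := by
  obtain ⟨u, hu, hmax⟩ := Finset.exists_max_image (g.succ v)
    (fun u => ((L u).map (fun p => p.2.2)).getD 0) (g.succ_nonempty v)
  obtain ⟨⟨w, e, t⟩, hx⟩ := hall u hu
  refine ⟨(u, e, t), hu, ⟨w, hx⟩, fun u' hu' => ?_⟩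
  obtain ⟨⟨w', e', t'⟩, hx'⟩ := hall u' hu'
  refine ⟨w', e', t', hx', ?_⟩
  have := hmax u' hu'
  simpa [hx, hx'] using this

lemma fl_chain {v u e : V} {t : ℕ} (h : fl g v = some (u, e, t)) (ht : 1 ≤ t) :
    v ∉ g.totalTarget ∧ u ∈ g.succ v ∧ ∃ w, fl g u = some (w, e, t - 1) := by
  obtain ⟨r, rfl⟩ : ∃ r, t = r + 1 := ⟨t - 1, by omega⟩
  have hself : lab g (r + 1) v = some (u, e, r + 1) := lab_self g h
  have h0 : lab g r v = none := lab_before g hself (by simp)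
  have hnR : v ∉ g.totalTarget := by
    intro hR; rw [lab_R g hR r] at h0; simp at h0
  rw [lab_succ] at hself
  obtain ⟨-, hsucc, hcase⟩ := labStep_new g h0 hself
  refine ⟨hnR, hsucc, ?_⟩
  rcases hcase with ⟨⟨w, hw⟩, -⟩ | ⟨⟨w, t', hw⟩, -, hall⟩
  · exact ⟨w, by simpa using lab_to_fl g hw⟩
  · have ht'r : t' = r := by
      have hle : t' ≤ r := lab_time_le g hw
      cases r with
      | zero => omega
      | succ r₀ =>
        have h0' : lab g r₀ v = none := lab_before g (lab_self g h) (by change r₀ < r₀ + 1 + 1; omega)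
        have hne := labStep_none_elim g (r := r₀) (by rw [← lab_succ]; exact h0) h0'
        have : ¬ ∀ u' ∈ g.succ v, ∃ x, lab g r₀ u' = some x := fun hc => hne.2 (cc_of_all g hc)
        push_neg at this
        obtain ⟨u₁, hu₁, hn₁⟩ := this
        have hn₁' : lab g r₀ u₁ = none := by
          cases hq : lab g r₀ u₁ with
          | none => rfl
          | some y => exact absurd hq (hn₁ y)
        obtain ⟨w₁, e₁, t₁, hw₁, hmax₁⟩ := hall u₁ hu₁
        have ht₁ : t₁ = r₀ + 1 := by
          rw [lab_succ] at hw₁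
          have := (labStep_new g hn₁' hw₁).1
          simpa using this
        have := hmax₁ w e t' hw
        omega
    subst ht'r
    exact ⟨w, by simpa using lab_to_fl g hw⟩

lemma fl_prompt {v u w e : V} {r : ℕ} (hv : lab g r v = none) (hu : u ∈ g.succ v)
    (hu' : fl g u = some (w, e, r)) (hg : Good g (g.owner v) e) :
    ∃ p : V × V × ℕ, fl g v = some p ∧ p.2.2 = r + 1 ∧ Good g (g.owner v) p.2.1 := by
  have hur : lab g r u = some (w, e, r) := lab_self g hu'
  have hab : Ab g r (lab g r) v := ⟨(u, e), hu, ⟨w, hur⟩, hg⟩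
  obtain ⟨u', e', heq, -, -, hg'⟩ := labStep_of_ab g hv hab
  refine ⟨(u', e', r + 1), lab_to_fl g (by rw [lab_succ]; exact heq), rfl, hg'⟩

lemma fl_dicho {v u e : V} {r : ℕ} (h : fl g v = some (u, e, r + 1)) :
    Good g (g.owner v) e ∨ ∀ u' ∈ g.succ v, ∃ x, lab g r u' = some x ∧ x.2.2 ≤ r := by
  have hself : lab g (r + 1) v = some (u, e, r + 1) := lab_self g h
  have h0 : lab g r v = none := lab_before g hself (by simp)
  rw [lab_succ] at hself
  obtain ⟨-, -, hcase⟩ := labStep_new g h0 hself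
  rcases hcase with ⟨-, hg⟩ | ⟨-, -, hall⟩
  · exact Or.inl hg
  · refine Or.inr fun u' hu' => ?_
    obtain ⟨w', e', t', hw', -⟩ := hall u' hu'
    exact ⟨(w', e', t'), hw', lab_time_le g hw'⟩

lemma fl_unassigned {v : V} (h : fl g v = none) :
    v ∉ g.totalTarget ∧ ∃ u ∈ g.succ v, fl g u = none := by
  have hnR : v ∉ g.totalTarget := by
    intro hR; rw [fl_R g hR] at h; simp at h
  refine ⟨hnR, ?_⟩
  by_contra hcon
  push_neg at hcon
  have hall : ∀ u ∈ g.succ v, ∃ x, fl g u = some x := by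
    intro u hu
    cases hq : fl g u with
    | none => exact absurd hq (hcon u hu)
    | some x => exact ⟨x, rfl⟩
  have hc : Cc g (lab g (Fintype.card V + 1)) v := cc_of_all g hall
  obtain ⟨x, hx⟩ := labStep_of_cc g (r := Fintype.card V + 1) h hc
  have : lab g (Fintype.card V + 1 + 1) v = some x := by rw [lab_succ]; exact hx
  rw [lab_final g (by omega) v] at this
  rw [show lab g (Fintype.card V + 1) v = fl g v from rfl, h] at this
  simp at this


/-- The value of a state for player `n` under the constructed profile. -/
noncomputable def W (g : MPRS V N) (n : Fin N) : Option V → ℝ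
  | none => 0
  | some v =>
    match fl g v with
    | none => 0
    | some x => g.gamma ^ x.2.2 * g.q n (some x.2.1)

lemma W_none (n : Fin N) : W g n none = 0 := rfl

lemma W_some_def (n : Fin N) (v : V) :
    W g n (some v) = (match fl g v with
      | none => (0:ℝ)
      | some x => g.gamma ^ x.2.2 * g.q n (some x.2.1)) := rfl

lemma W_some_eq {v : V} {n : Fin N} {w e : V} {t : ℕ} (h : fl g v = some (w, e, t)) :
    W g n (some v) = g.gamma ^ t * g.q n (some e) := by
  rw [W_some_def, h]

lemma W_some_none {v : V} {n : Fin N} (h : fl g v = none) : W g n (some v) = 0 := by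
  rw [W_some_def, h]

lemma q_some (n : Fin N) (e : V) :
    g.q n (some e) = if e ∈ g.target n then (if g.reacher n then 1 else -1) else 0 := rfl

lemma q_abs_le (n : Fin N) (s : Option V) : |g.q n s| ≤ 1 := by
  cases s with
  | none => simp [MPRS.q]
  | some v =>
    rw [q_some]
    split
    · split <;> norm_num
    · norm_num

lemma gpow_le {a b : ℕ} (h : a ≤ b) : g.gamma ^ b ≤ g.gamma ^ a :=
  pow_le_pow_of_le_one (le_of_lt g.gamma_pos) (le_of_lt g.gamma_lt_one) h

lemma gpow_pos (a : ℕ) : 0 < g.gamma ^ a := pow_pos g.gamma_pos a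

lemma W_abs_le (n : Fin N) (s : Option V) : |W g n s| ≤ 1 := by
  cases s with
  | none => simp [W_none]
  | some v =>
    cases h : fl g v with
    | none => simp [W_some_none g h]
    | some x =>
      obtain ⟨w, e, t⟩ := x
      rw [W_some_eq g h, abs_mul, abs_pow, abs_of_pos g.gamma_pos]
      calc g.gamma ^ t * |g.q n (some e)| ≤ 1 * 1 := by
            apply mul_le_mul _ (q_abs_le g n _) (abs_nonneg _) zero_le_one
            calc g.gamma ^ t ≤ g.gamma ^ 0 := gpow_le g (Nat.zero_le t)
              _ = 1 := pow_zero _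
        _ = 1 := one_mul 1

lemma W_R {v : V} {n : Fin N} (h : v ∈ g.totalTarget) : W g n (some v) = g.q n (some v) := by
  rw [W_some_eq g (fl_R g h), pow_zero, one_mul]

/-- Local optimality of the constructed labelling. -/
lemma W_local {v : V} (hv : v ∉ g.totalTarget) {u : V} (hu : u ∈ g.succ v) :
    g.gamma * W g (g.owner v) (some u) ≤ W g (g.owner v) (some v) := by
  set n := g.owner v with hn
  have hγ0 : (0:ℝ) < g.gamma := g.gamma_pos
  cases hfv : fl g v with
  | none =>
    -- value of v is 0; no successor can have positive value
    rw [W_some_none g hfv]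
    cases hfu : fl g u with
    | none => rw [W_some_none g hfu]; simp
    | some xu =>
      obtain ⟨wu, eu, tu⟩ := xu
      rw [W_some_eq g hfu]
      rcases le_or_gt (g.q n (some eu)) 0 with hq | hq
      · have h1 : g.gamma ^ tu * g.q n (some eu) ≤ 0 := by nlinarith [gpow_pos g tu]
        nlinarith
      · exfalso
        have hre : g.reacher n = true ∧ eu ∈ g.target n := by
          rw [q_some] at hq
          by_cases h1 : eu ∈ g.target n
          · by_cases h2 : g.reacher n
            · exact ⟨h2, h1⟩
            · rw [if_pos h1, if_neg h2] at hq; norm_num at hq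
          · rw [if_neg h1] at hq; norm_num at hq
        have hg : Good g n eu := by rw [Good]; simp [hre.1, hre.2]
        obtain ⟨p, hp, -, -⟩ := fl_prompt g (fl_none_all g hfv tu) hu hfu hg
        rw [hfv] at hp; simp at hp
  | some xv =>
    obtain ⟨wv, ev, tv⟩ := xv
    have ht1 : 1 ≤ tv := fl_notR g hfv hv
    rw [W_some_eq g hfv]
    -- Claim A : a good-for-n successor label bounds tv
    have claimA : ∀ wu eu tu, fl g u = some (wu, eu, tu) → Good g n eu →
        tv ≤ tu + 1 ∧ (tv = tu + 1 → Good g n ev) := by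
      intro wu eu tu hxu hg
      rcases lt_or_ge (tu + 1) tv with hlt | hle
      · exfalso
        have hnone : lab g tu v = none := lab_before g hfv (by change tu < tv; omega)
        obtain ⟨p, hp, hpt, -⟩ := fl_prompt g hnone hu hxu hg
        rw [hfv] at hp
        cases hp
        have hpt' : tv = tu + 1 := hpt
        omega
      · refine ⟨hle, fun heq => ?_⟩
        have hnone : lab g tu v = none := lab_before g hfv (by change tu < tv; omega)
        obtain ⟨p, hp, hpt, hpg⟩ := fl_prompt g hnone hu hxu hg
        rw [hfv] at hp
        cases hp
        exact hpg
    -- Claim B : if the end of v is not good for n, all successors are labelled early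
    have claimB : ¬ Good g n ev → ∀ u' ∈ g.succ v, ∃ wu eu tu,
        fl g u' = some (wu, eu, tu) ∧ tu + 1 ≤ tv := by
      intro hng u' hu'
      obtain ⟨r, rfl⟩ : ∃ r, tv = r + 1 := ⟨tv - 1, by omega⟩
      rcases fl_dicho g hfv with hg | hall
      · exact absurd hg hng
      · obtain ⟨x, hx, hxt⟩ := hall u' hu'
        obtain ⟨wu, eu, tu⟩ := x
        have hxt' : tu ≤ r := hxt
        exact ⟨wu, eu, tu, lab_to_fl g hx, by omega⟩
    by_cases hrch : g.reacher n = true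
    · -- n is a reacher
      by_cases hev : ev ∈ g.target n
      · have hqe : g.q n (some ev) = 1 := by rw [q_some, if_pos hev, if_pos hrch]
        rw [hqe, mul_one]
        cases hfu : fl g u with
        | none =>
          rw [W_some_none g hfu, mul_zero]; exact le_of_lt (gpow_pos g tv)
        | some xu =>
          obtain ⟨wu, eu, tu⟩ := xu
          rw [W_some_eq g hfu]
          by_cases heu : eu ∈ g.target n
          · have hqu : g.q n (some eu) = 1 := by rw [q_some, if_pos heu, if_pos hrch]
            rw [hqu, mul_one]
            have hg : Good g n eu := by simp [Good, heu, hrch]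
            have hA := (claimA wu eu tu hfu hg).1
            calc g.gamma * g.gamma ^ tu = g.gamma ^ (tu + 1) := by ring
              _ ≤ g.gamma ^ tv := gpow_le g hA
          · have hqu : g.q n (some eu) = 0 := by rw [q_some, if_neg heu]
            rw [hqu, mul_zero, mul_zero]; exact le_of_lt (gpow_pos g tv)
      · have hqe : g.q n (some ev) = 0 := by rw [q_some, if_neg hev]
        rw [hqe, mul_zero]
        have hng : ¬ Good g n ev := by simp [Good, hev, hrch]
        cases hfu : fl g u with
        | none => rw [W_some_none g hfu, mul_zero]
        | some xu =>
          obtain ⟨wu, eu, tu⟩ := xu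
          rw [W_some_eq g hfu]
          by_cases heu : eu ∈ g.target n
          · exfalso
            have hg : Good g n eu := by simp [Good, heu, hrch]
            have hA := claimA wu eu tu hfu hg
            obtain ⟨wu', eu', tu', hfu', hB⟩ := claimB hng u hu
            rw [hfu] at hfu'
            cases hfu'
            exact hng (hA.2 (by omega))
          · have hqu : g.q n (some eu) = 0 := by rw [q_some, if_neg heu]
            rw [hqu, mul_zero, mul_zero]
    · -- n is an avoider
      have hrf : ¬ (g.reacher n = true) := hrch
      by_cases hev : ev ∈ g.target n
      · have hqe : g.q n (some ev) = -1 := by rw [q_some, if_pos hev, if_neg hrf]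
        rw [hqe]
        have hng : ¬ Good g n ev := by simp [Good, hev]; simpa using hrf
        obtain ⟨wu, eu, tu, hfu, hB⟩ := claimB hng u hu
        rw [W_some_eq g hfu]
        by_cases heu : eu ∈ g.target n
        · have hqu : g.q n (some eu) = -1 := by rw [q_some, if_pos heu, if_neg hrf]
          rw [hqu]
          have hle : g.gamma ^ tv ≤ g.gamma ^ (tu + 1) := gpow_le g hB
          have hpow : g.gamma ^ (tu + 1) = g.gamma * g.gamma ^ tu := by ring
          nlinarith
        · exfalso
          have hg : Good g n eu := by simp [Good, heu]; simpa using hrf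
          have hA := claimA wu eu tu hfu hg
          exact hng (hA.2 (by omega))
      · have hqe : g.q n (some ev) = 0 := by rw [q_some, if_neg hev]
        rw [hqe, mul_zero]
        cases hfu : fl g u with
        | none => rw [W_some_none g hfu, mul_zero]
        | some xu =>
          obtain ⟨wu, eu, tu⟩ := xu
          rw [W_some_eq g hfu]
          by_cases heu : eu ∈ g.target n
          · have hqu : g.q n (some eu) = -1 := by rw [q_some, if_pos heu, if_neg hrf]
            rw [hqu]
            nlinarith [gpow_pos g tu, g.gamma_pos]
          · have hqu : g.q n (some eu) = 0 := by rw [q_some, if_neg heu]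
            rw [hqu, mul_zero, mul_zero]


/-- The constructed memoryless choice. -/
noncomputable def nxt (g : MPRS V N) (v : V) : V :=
  match fl g v with
  | some x => x.1
  | none => if h : ∃ u ∈ g.succ v, fl g u = none then h.choose else v

lemma nxt_def (v : V) : nxt g v = (match fl g v with
    | some x => x.1
    | none => if h : ∃ u ∈ g.succ v, fl g u = none then h.choose else v) := rfl

lemma nxt_assigned {v : V} {x : V × V × ℕ} (h : fl g v = some x) : nxt g v = x.1 := by
  rw [nxt_def, h]

lemma nxt_unassigned {v : V} (h : fl g v = none) :
    nxt g v ∈ g.succ v ∧ fl g (nxt g v) = none := by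
  have hex := (fl_unassigned g h).2
  rw [nxt_def, h]
  simp only [dif_pos hex]
  obtain ⟨h1, h2⟩ := hex.choose_spec
  exact ⟨h1, h2⟩

lemma nxt_chain {v : V} (hv : v ∉ g.totalTarget) {w e : V} {t : ℕ}
    (h : fl g v = some (w, e, t)) :
    nxt g v ∈ g.succ v ∧ ∃ w', fl g (nxt g v) = some (w', e, t - 1) := by
  have ht : 1 ≤ t := fl_notR g h hv
  obtain ⟨-, hsucc, hch⟩ := fl_chain g h ht
  rw [nxt_assigned g h]
  exact ⟨hsucc, hch⟩

lemma nxt_mem {v : V} (hv : v ∉ g.totalTarget) : nxt g v ∈ g.succ v := by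
  cases h : fl g v with
  | none => exact (nxt_unassigned g h).1
  | some x => obtain ⟨w, e, t⟩ := x; exact (nxt_chain g hv h).1

/-- The constructed memoryless profile. -/
noncomputable def sig (g : MPRS V N) : Fin N → Strat V := fun _ _ v => nxt g v

lemma q_free {v : V} (hv : v ∉ g.totalTarget) (n : Fin N) : g.q n (some v) = 0 := by
  rw [q_some, if_neg (fun hm => hv (mem_totalTarget g hm))]

lemma step_free {σ : Fin N → Strat V} {h : List (Option V)} {v : V}
    (hv : v ∉ g.totalTarget) :
    g.step σ h (some v) = some (σ (g.owner v) h v) := by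
  show (if v ∈ g.totalTarget then none else some (σ (g.owner v) h v)) = _
  rw [if_neg hv]

lemma step_target {σ : Fin N → Strat V} {h : List (Option V)} {v : V}
    (hv : v ∈ g.totalTarget) : g.step σ h (some v) = none := by
  show (if v ∈ g.totalTarget then none else some (σ (g.owner v) h v)) = _
  rw [if_pos hv]

/-- Heart of the one-step analysis: following `nxt` preserves value exactly. -/
lemma W_step_nxt {v : V} (hv : v ∉ g.totalTarget) (n : Fin N) :
    g.gamma * W g n (some (nxt g v)) = W g n (some v) := by
  cases hfv : fl g v with
  | none =>
    rw [W_some_none g hfv, W_some_none g (nxt_unassigned g hfv).2, mul_zero]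
  | some x =>
    obtain ⟨w, e, t⟩ := x
    have ht : 1 ≤ t := fl_notR g hfv hv
    obtain ⟨-, w', hch⟩ := nxt_chain g hv hfv
    rw [W_some_eq g hfv, W_some_eq g hch]
    have hpow : g.gamma ^ t = g.gamma * g.gamma ^ (t - 1) := by
      rw [← pow_succ']
      congr 1
      omega
    rw [hpow]
    ring

lemma stepW_eq (n : Fin N) (h : List (Option V)) (s : Option V) :
    g.q n s + g.gamma * W g n (g.step (sig g) h s) = W g n s := by
  cases s with
  | none => simp [MPRS.step, W_none, MPRS.q]
  | some v =>
    by_cases hv : v ∈ g.totalTarget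
    · rw [step_target g hv, W_none, mul_zero, add_zero, W_R g hv]
    · rw [step_free g hv, q_free g hv, zero_add]
      exact W_step_nxt g hv n

lemma stepW_le (n : Fin N) {σn : Strat V} (hσ : g.ValidStrat n σn)
    (h : List (Option V)) (s : Option V) :
    g.q n s + g.gamma * W g n (g.step (Function.update (sig g) n σn) h s) ≤ W g n s := by
  cases s with
  | none => simp [MPRS.step, W_none, MPRS.q]
  | some v =>
    by_cases hv : v ∈ g.totalTarget
    · rw [step_target g hv, W_none, mul_zero, add_zero, W_R g hv]
    · rw [step_free g hv, q_free g hv, zero_add]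
      by_cases how : g.owner v = n
      · rw [how, Function.update_self]
        have := W_local g hv (hσ h v how hv)
        rwa [how] at this
      · rw [Function.update_of_ne how]
        exact le_of_eq (W_step_nxt g hv n)


lemma partial_le {σ : Fin N → Strat V} {n : Fin N}
    (hstep : ∀ h s, g.q n s + g.gamma * W g n (g.step σ h s) ≤ W g n s) :
    ∀ (k : ℕ) (h : List (Option V)) (s : Option V),
      (∑ t ∈ Finset.range k, g.gamma ^ t * g.q n (g.playAux σ t h s)) +
        g.gamma ^ k * W g n (g.playAux σ k h s) ≤ W g n s := by
  intro k
  induction k with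
  | zero => intro h s; simp [MPRS.playAux]
  | succ k ih =>
    intro h s
    have hps : ∀ t, g.playAux σ (t + 1) h s = g.playAux σ t (h ++ [s]) (g.step σ h s) :=
      fun t => rfl
    rw [Finset.sum_range_succ']
    have key : (∑ t ∈ Finset.range k, g.gamma ^ (t + 1) * g.q n (g.playAux σ (t + 1) h s))
        = g.gamma * ∑ t ∈ Finset.range k,
            g.gamma ^ t * g.q n (g.playAux σ t (h ++ [s]) (g.step σ h s)) := by
      rw [Finset.mul_sum]
      refine Finset.sum_congr rfl fun t _ => ?_
      rw [hps t]; ring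
    rw [key, hps k]
    have ih' := ih (h ++ [s]) (g.step σ h s)
    have hs := hstep h s
    have hγ : (0:ℝ) ≤ g.gamma := le_of_lt g.gamma_pos
    have hmul := mul_le_mul_of_nonneg_left ih' hγ
    have h0 : g.playAux σ 0 h s = s := rfl
    rw [h0, pow_zero, one_mul, pow_succ]
    nlinarith [hmul, hs]

lemma partial_eq {n : Fin N} :
    ∀ (k : ℕ) (h : List (Option V)) (s : Option V),
      (∑ t ∈ Finset.range k, g.gamma ^ t * g.q n (g.playAux (sig g) t h s)) +
        g.gamma ^ k * W g n (g.playAux (sig g) k h s) = W g n s := by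
  intro k
  induction k with
  | zero => intro h s; simp [MPRS.playAux]
  | succ k ih =>
    intro h s
    have hps : ∀ t, g.playAux (sig g) (t + 1) h s
        = g.playAux (sig g) t (h ++ [s]) (g.step (sig g) h s) := fun t => rfl
    rw [Finset.sum_range_succ']
    have key : (∑ t ∈ Finset.range k,
          g.gamma ^ (t + 1) * g.q n (g.playAux (sig g) (t + 1) h s))
        = g.gamma * ∑ t ∈ Finset.range k,
            g.gamma ^ t * g.q n (g.playAux (sig g) t (h ++ [s]) (g.step (sig g) h s)) := by
      rw [Finset.mul_sum]
      refine Finset.sum_congr rfl fun t _ => ?_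
      rw [hps t]; ring
    rw [key, hps k]
    have ih' := ih (h ++ [s]) (g.step (sig g) h s)
    have hs := stepW_eq g n h s
    have h0 : g.playAux (sig g) 0 h s = s := rfl
    rw [h0, pow_zero, one_mul, pow_succ]
    linear_combination g.gamma * ih' + hs

lemma summable_payoff (σ : Fin N → Strat V) (n : Fin N) (s₀ : Option V) :
    Summable (fun t : ℕ => g.gamma ^ t * g.q n (g.play σ s₀ t)) := by
  refine Summable.of_norm_bounded
    (summable_geometric_of_lt_one (le_of_lt g.gamma_pos) g.gamma_lt_one) (fun t => ?_)
  rw [Real.norm_eq_abs, abs_mul, abs_pow, abs_of_pos g.gamma_pos]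
  calc g.gamma ^ t * |g.q n (g.play σ s₀ t)| ≤ g.gamma ^ t * 1 :=
        mul_le_mul_of_nonneg_left (q_abs_le g n _) (le_of_lt (gpow_pos g t))
    _ = g.gamma ^ t := mul_one _

open Filter in
lemma tendsto_tail (σ : Fin N → Strat V) (n : Fin N) (s₀ : Option V) :
    Tendsto (fun k => g.gamma ^ k * W g n (g.play σ s₀ k)) atTop (nhds 0) := by
  refine squeeze_zero_norm (fun k => ?_)
    (tendsto_pow_atTop_nhds_zero_of_lt_one (le_of_lt g.gamma_pos) g.gamma_lt_one)
  rw [Real.norm_eq_abs, abs_mul, abs_pow, abs_of_pos g.gamma_pos]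
  calc g.gamma ^ k * |W g n (g.play σ s₀ k)| ≤ g.gamma ^ k * 1 :=
        mul_le_mul_of_nonneg_left (W_abs_le g n _) (le_of_lt (gpow_pos g k))
    _ = g.gamma ^ k := mul_one _

open Filter in
lemma Q_sig_eq (n : Fin N) (s₀ : Option V) : g.Q n s₀ (sig g) = W g n s₀ := by
  have hsum := summable_payoff g (sig g) n s₀
  have h1 : Tendsto (fun k => ∑ t ∈ Finset.range k,
      g.gamma ^ t * g.q n (g.play (sig g) s₀ t)) atTop (nhds (g.Q n s₀ (sig g))) :=
    hsum.hasSum.tendsto_sum_nat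
  have heq : ∀ k, (∑ t ∈ Finset.range k, g.gamma ^ t * g.q n (g.play (sig g) s₀ t))
      = W g n s₀ - g.gamma ^ k * W g n (g.play (sig g) s₀ k) := by
    intro k
    have := partial_eq g (n := n) k [] s₀
    have hpl : ∀ t, g.play (sig g) s₀ t = g.playAux (sig g) t [] s₀ := fun t => rfl
    simp only [hpl]
    linarith
  have h2 : Tendsto (fun k => W g n s₀ - g.gamma ^ k * W g n (g.play (sig g) s₀ k))
      atTop (nhds (W g n s₀)) := by
    have h3 := Tendsto.sub (tendsto_const_nhds (x := W g n s₀) (f := atTop))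
      (tendsto_tail g (sig g) n s₀)
    rw [sub_zero] at h3
    exact h3
  have h1' : Tendsto (fun k => W g n s₀ - g.gamma ^ k * W g n (g.play (sig g) s₀ k))
      atTop (nhds (g.Q n s₀ (sig g))) := h1.congr (fun k => heq k)
  exact tendsto_nhds_unique h1' h2

open Filter in
lemma Q_dev_le (n : Fin N) (s₀ : Option V) {σn : Strat V} (hσ : g.ValidStrat n σn) :
    g.Q n s₀ (Function.update (sig g) n σn) ≤ W g n s₀ := by
  set σ := Function.update (sig g) n σn with hσdef
  have hsum := summable_payoff g σ n s₀
  have h1 : Tendsto (fun k => ∑ t ∈ Finset.range k,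
      g.gamma ^ t * g.q n (g.play σ s₀ t)) atTop (nhds (g.Q n s₀ σ)) :=
    hsum.hasSum.tendsto_sum_nat
  have h2 : Tendsto (fun k => W g n s₀ - g.gamma ^ k * W g n (g.play σ s₀ k))
      atTop (nhds (W g n s₀)) := by
    have h3 := Tendsto.sub (tendsto_const_nhds (x := W g n s₀) (f := atTop))
      (tendsto_tail g σ n s₀)
    rw [sub_zero] at h3
    exact h3
  refine le_of_tendsto_of_tendsto' h1 h2 (fun k => ?_)
  have := partial_le g (stepW_le g n hσ) k [] s₀
  have hpl : ∀ t, g.play σ s₀ t = g.playAux σ t [] s₀ := fun t => rfl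
  simp only [hpl]
  linarith

end MPRSNE


/-- Every quantitative MPRS game has a Nash equilibrium in deterministic
memoryless strategies. -/
theorem quantitative_MPRS_has_memoryless_NE
    {V : Type} [Fintype V] [DecidableEq V] {N : ℕ} (g : MPRS V N) :
    ∃ σhat : Fin N → MPRS.Strat V,
      (∀ n, g.ValidStrat n (σhat n)) ∧
      (∀ n, MPRS.Memoryless (σhat n)) ∧
      (∀ (n : Fin N) (s₀ : Option V) (σn : MPRS.Strat V), g.ValidStrat n σn →
        g.Q n s₀ (Function.update σhat n σn) ≤ g.Q n s₀ σhat) := by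
  refine ⟨MPRSNE.sig g, fun n h v _ hv => MPRSNE.nxt_mem g hv,
    fun n h h' v => rfl, fun n s₀ σn hσ => ?_⟩
  calc g.Q n s₀ (Function.update (MPRSNE.sig g) n σn) ≤ MPRSNE.W g n s₀ :=
        MPRSNE.Q_dev_le g n s₀ hσ
    _ = g.Q n s₀ (MPRSNE.sig g) := (MPRSNE.Q_sig_eq g n s₀).symm
end

section
/- Every qualitative MPRS game has a Nash equilibrium in deterministic memoryless strategies: there exists a memoryless deterministic strategy profile σ̂ = (σ̂^1,...,σ̂^N) such that for every player n ∈ {1,...,N}, every initial state s₀ ∈ S, and every (possibly history-dependent) deterministic strategy σ^n of player n, Q̃^n(s₀, σ̂^n, σ̂^{-n}) ≥ Q̃^n(s₀, σ^n, σ̂^{-n}). -/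
namespace MPRS

variable {V : Type} [Fintype V] [DecidableEq V] {N : ℕ} (g : MPRS V N)

/-! ### Basic facts about payoffs and plays -/

lemma target_subset (n : Fin N) : g.target n ⊆ g.totalTarget :=
  fun v hv => Finset.mem_biUnion.mpr ⟨n, Finset.mem_univ n, hv⟩

lemma q_none (n : Fin N) : g.q n none = 0 := rfl

lemma q_some (n : Fin N) (v : V) :
    g.q n (some v) = if v ∈ g.target n then (if g.reacher n then 1 else -1) else 0 := rfl

lemma q_vals (n : Fin N) (s : Option V) : g.q n s = -1 ∨ g.q n s = 0 ∨ g.q n s = 1 := by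
  cases s with
  | none => simp [q_none]
  | some v => rw [q_some]; split_ifs <;> simp

lemma q_zero_of_not_target (n : Fin N) (v : V) (h : v ∉ g.totalTarget) :
    g.q n (some v) = 0 := by
  rw [q_some, if_neg]
  exact fun hv => h (g.target_subset n hv)

lemma q_nonneg_of_reacher (n : Fin N) (h : g.reacher n = true) (s : Option V) :
    0 ≤ g.q n s := by
  cases s with
  | none => simp [q_none]
  | some v => rw [q_some, h]; split_ifs <;> simp_all

lemma q_nonpos_of_avoider (n : Fin N) (h : g.reacher n = false) (s : Option V) :
    g.q n s ≤ 0 := by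
  cases s with
  | none => simp [q_none]
  | some v => rw [q_some, h]; split_ifs <;> simp_all

lemma step_none' (σ : Fin N → Strat V) (h : List (Option V)) : g.step σ h none = none := rfl

lemma step_some' (σ : Fin N → Strat V) (h : List (Option V)) (v : V) :
    g.step σ h (some v) =
      if v ∈ g.totalTarget then none else some (σ (g.owner v) h v) := rfl

lemma playAux_zero (σ : Fin N → Strat V) (h : List (Option V)) (s : Option V) :
    g.playAux σ 0 h s = s := rfl

lemma playAux_succ (σ : Fin N → Strat V) (t : ℕ) (h : List (Option V)) (s : Option V) :
    g.playAux σ (t + 1) h s = g.playAux σ t (h ++ [s]) (g.step σ h s) := rfl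

lemma play_zero (σ : Fin N → Strat V) (s₀ : Option V) : g.play σ s₀ 0 = s₀ := rfl

lemma exists_hist (σ : Fin N → Strat V) :
    ∀ (t : ℕ) (h : List (Option V)) (s : Option V),
      ∃ h', g.playAux σ (t + 1) h s = g.step σ h' (g.playAux σ t h s) := by
  intro t
  induction t with
  | zero => exact fun h s => ⟨h, rfl⟩
  | succ t ih =>
    intro h s
    obtain ⟨h', e⟩ := ih (h ++ [s]) (g.step σ h s)
    exact ⟨h', e⟩

lemma play_step (σ : Fin N → Strat V) (s₀ : Option V) (t : ℕ) :
    ∃ h', g.play σ s₀ (t + 1) = g.step σ h' (g.play σ s₀ t) :=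
  g.exists_hist σ t [] s₀

/-! ### The qualitative payoff is the payoff of the first target hit -/

lemma Qtil_of_nohit (σ : Fin N → Strat V) (n : Fin N) (s₀ : Option V)
    (hno : ∀ t v, g.play σ s₀ t = some v → v ∉ g.totalTarget) :
    g.Qtil n s₀ σ = 0 := by
  have hterm : ∀ t : ℕ, g.gamma ^ t * g.q n (g.play σ s₀ t) = 0 := by
    intro t
    cases hp : g.play σ s₀ t with
    | none => rw [q_none, mul_zero]
    | some v => rw [q_zero_of_not_target g n v (hno t v hp), mul_zero]
  have hQ : g.Q n s₀ σ = 0 := by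
    unfold Q
    rw [tsum_congr hterm, tsum_zero]
  unfold Qtil
  rw [hQ]
  norm_num

lemma Qtil_of_hit (σ : Fin N → Strat V) (n : Fin N) (s₀ : Option V) (T : ℕ) (r : V)
    (hT : g.play σ s₀ T = some r) (hr : r ∈ g.totalTarget)
    (hmin : ∀ t, t < T → ∀ v, g.play σ s₀ t = some v → v ∉ g.totalTarget) :
    g.Qtil n s₀ σ = g.q n (some r) := by
  have hafter : ∀ k, g.play σ s₀ (T + 1 + k) = none := by
    intro k
    induction k with
    | zero =>
      obtain ⟨h', e⟩ := g.play_step σ s₀ T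
      rw [Nat.add_zero, e, hT, step_some', if_pos hr]
    | succ k ih =>
      obtain ⟨h', e⟩ := g.play_step σ s₀ (T + 1 + k)
      have harith : T + 1 + (k + 1) = (T + 1 + k) + 1 := by ring
      rw [harith, e, ih, step_none']
  have hzero : ∀ t, t ≠ T → g.gamma ^ t * g.q n (g.play σ s₀ t) = 0 := by
    intro t ht
    rcases lt_or_gt_of_ne ht with hlt | hgt
    · cases hp : g.play σ s₀ t with
      | none => rw [q_none, mul_zero]
      | some v => rw [q_zero_of_not_target g n v (hmin t hlt v hp), mul_zero]
    · have harith : t = T + 1 + (t - T - 1) := by omega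
      rw [harith, hafter, q_none, mul_zero]
  have hQ : g.Q n s₀ σ = g.gamma ^ T * g.q n (some r) := by
    unfold Q
    rw [tsum_eq_single T hzero, hT]
  have hpow : 0 < g.gamma ^ T := pow_pos g.gamma_pos T
  rcases g.q_vals n (some r) with h | h | h <;> unfold Qtil <;> rw [hQ, h]
  · rw [if_neg (by nlinarith), if_pos (by nlinarith)]
  · rw [mul_zero, if_neg (lt_irrefl 0), if_neg (lt_irrefl 0)]
  · rw [mul_one, if_pos hpow]


/-! ### The equilibrium data: a memoryless pointer `tau`, per-player values, ranks -/

structure NEData (g : MPRS V N) where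
  tau : V → V
  val : Fin N → V → ℝ
  rank : V → ℕ
  h1 : ∀ v, v ∉ g.totalTarget → tau v ∈ g.succ v
  h2 : ∀ v ∈ g.totalTarget, ∀ n, val n v = g.q n (some v)
  h3 : ∀ v, v ∉ g.totalTarget → ∀ n, val n v = val n (tau v)
  h4 : ∀ v, v ∉ g.totalTarget → ∀ w ∈ g.succ v, val (g.owner v) w ≤ val (g.owner v) v
  h5 : ∀ (n : Fin N), ∀ v, v ∉ g.totalTarget → val n v ≠ 0 → rank (tau v) < rank v
  h6 : ∀ v, v ∉ g.totalTarget → val (g.owner v) v < 0 → ∀ w ∈ g.succ v, rank w < rank v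

/-- Partial data during the attractor-like construction. -/
structure PartialData (g : MPRS V N) where
  D : Finset V
  tau : V → V
  val : Fin N → V → ℝ
  rank : V → ℕ
  iR : g.totalTarget ⊆ D
  i2 : ∀ v ∈ D, v ∉ g.totalTarget → tau v ∈ g.succ v ∧ tau v ∈ D ∧ rank (tau v) < rank v
  i3 : ∀ v ∈ g.totalTarget, ∀ n, val n v = g.q n (some v)
  i4 : ∀ v ∈ D, v ∉ g.totalTarget → ∀ n, val n v = val n (tau v)
  i5 : ∀ v ∈ D, v ∉ g.totalTarget →
      ((g.reacher (g.owner v) = true ∧ val (g.owner v) v = 1) ∨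
        (∀ w ∈ g.succ v, w ∈ D ∧ val (g.owner v) w ≤ val (g.owner v) v ∧ rank w < rank v))
  i7 : ∀ v ∈ D, ∀ n, val n v = -1 ∨ val n v = 0 ∨ val n v = 1
  i7r : ∀ v ∈ D, ∀ n, g.reacher n = true → 0 ≤ val n v
  i7a : ∀ v ∈ D, ∀ n, g.reacher n = false → val n v ≤ 0
  i8 : ∀ v ∈ D, rank v < D.card

/-- The rule for deciding a new vertex: either its owner is a reacher with a
decided successor of value 1, or all of its successors are decided. -/
def Rule (P : PartialData g) (v : V) : Prop :=
  (g.reacher (g.owner v) = true ∧ ∃ w ∈ g.succ v, w ∈ P.D ∧ P.val (g.owner v) w = 1)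
    ∨ (∀ w ∈ g.succ v, w ∈ P.D)

/-- The initial partial data: just the target set. -/
noncomputable def initPartial : PartialData g where
  D := g.totalTarget
  tau := fun v => (g.succ_nonempty v).choose
  val := fun n v => g.q n (some v)
  rank := fun _ => 0
  iR := le_refl _
  i2 := fun v hv hv' => absurd hv hv'
  i3 := fun _ _ _ => rfl
  i4 := fun v hv hv' => absurd hv hv'
  i5 := fun v hv hv' => absurd hv hv'
  i7 := fun v _ n => g.q_vals n (some v)
  i7r := fun v _ n hn => g.q_nonneg_of_reacher n hn (some v)
  i7a := fun v _ n hn => g.q_nonpos_of_avoider n hn (some v)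
  i8 := fun v hv => Finset.card_pos.mpr ⟨v, hv⟩

/-- Extension step: decide one new vertex to which the rule applies. -/
lemma extend (P : PartialData g) (v : V) (hv : v ∉ P.D) (hrule : Rule g P v) :
    ∃ P' : PartialData g, P'.D = insert v P.D := by
  have hvR : v ∉ g.totalTarget := fun h => hv (P.iR h)
  -- choose the successor to point to
  have hsel : ∃ w, w ∈ g.succ v ∧ w ∈ P.D ∧
      ((g.reacher (g.owner v) = true ∧ P.val (g.owner v) w = 1) ∨
        (∀ w' ∈ g.succ v, w' ∈ P.D ∧ P.val (g.owner v) w' ≤ P.val (g.owner v) w)) := by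
    rcases hrule with ⟨hre, w, hw1, hw2, hw3⟩ | hall
    · exact ⟨w, hw1, hw2, Or.inl ⟨hre, hw3⟩⟩
    · obtain ⟨w, hw1, hmax⟩ :=
        Finset.exists_max_image (g.succ v) (P.val (g.owner v)) (g.succ_nonempty v)
      exact ⟨w, hw1, hall w hw1, Or.inr (fun w' hw' => ⟨hall w' hw', hmax w' hw'⟩)⟩
  obtain ⟨w, hwsucc, hwD, hcase⟩ := hsel
  have hwv : w ≠ v := fun h => hv (h ▸ hwD)
  have hne : ∀ u ∈ P.D, u ≠ v := fun u hu h => hv (h ▸ hu)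
  refine ⟨⟨insert v P.D,
    Function.update P.tau v w,
    fun n => Function.update (P.val n) v (P.val n w),
    Function.update P.rank v P.D.card, ?_, ?_, ?_, ?_, ?_, ?_, ?_, ?_, ?_⟩, rfl⟩
  · exact P.iR.trans (Finset.subset_insert v P.D)
  · -- i2
    intro u hu huR
    rcases Finset.mem_insert.mp hu with rfl | hu'
    · rw [Function.update_self, Function.update_of_ne hwv, Function.update_self]
      exact ⟨hwsucc, Finset.mem_insert_of_mem hwD, P.i8 w hwD⟩
    · have h1 := P.i2 u hu' huR
      have htau : P.tau u ≠ v := hne _ h1.2.1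
      rw [Function.update_of_ne (hne u hu'), Function.update_of_ne htau,
        Function.update_of_ne (hne u hu')]
      exact ⟨h1.1, Finset.mem_insert_of_mem h1.2.1, h1.2.2⟩
  · -- i3
    intro u hu n
    simpa [Function.update_apply, hne u (P.iR hu)] using P.i3 u hu n
  · -- i4
    intro u hu huR n
    rcases Finset.mem_insert.mp hu with rfl | hu'
    · simp [Function.update_apply, hwv]
    · have htau : P.tau u ≠ v := hne _ (P.i2 u hu' huR).2.1
      simpa [Function.update_apply, hne u hu', htau] using P.i4 u hu' huR n
  · -- i5
    intro u hu huR
    rcases Finset.mem_insert.mp hu with rfl | hu'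
    · rcases hcase with ⟨hre, h1⟩ | hmax
      · left
        refine ⟨hre, ?_⟩
        simpa [Function.update_apply] using h1
      · right
        intro w' hw'
        have hw'D := (hmax w' hw').1
        refine ⟨Finset.mem_insert_of_mem hw'D, ?_, ?_⟩
        · simpa [Function.update_apply, hne w' hw'D] using (hmax w' hw').2
        · simpa [Function.update_apply, hne w' hw'D] using P.i8 w' hw'D
    · rcases P.i5 u hu' huR with ⟨hre, h1⟩ | hall
      · left
        refine ⟨hre, ?_⟩
        simpa [Function.update_apply, hne u hu'] using h1
      · right
        intro w' hw'
        have h1 := hall w' hw'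
        refine ⟨Finset.mem_insert_of_mem h1.1, ?_, ?_⟩
        · simpa [Function.update_apply, hne w' h1.1, hne u hu'] using h1.2.1
        · simpa [Function.update_apply, hne w' h1.1, hne u hu'] using h1.2.2
  · -- i7
    intro u hu n
    rcases Finset.mem_insert.mp hu with rfl | hu'
    · simpa [Function.update_apply] using P.i7 w hwD n
    · simpa [Function.update_apply, hne u hu'] using P.i7 u hu' n
  · -- i7r
    intro u hu n hn
    rcases Finset.mem_insert.mp hu with rfl | hu'
    · simpa [Function.update_apply] using P.i7r w hwD n hn
    · simpa [Function.update_apply, hne u hu'] using P.i7r u hu' n hn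
  · -- i7a
    intro u hu n hn
    rcases Finset.mem_insert.mp hu with rfl | hu'
    · simpa [Function.update_apply] using P.i7a w hwD n hn
    · simpa [Function.update_apply, hne u hu'] using P.i7a u hu' n hn
  · -- i8
    intro u hu
    rw [Finset.card_insert_of_notMem hv]
    rcases Finset.mem_insert.mp hu with rfl | hu'
    · rw [Function.update_self]; omega
    · rw [Function.update_of_ne (hne u hu')]
      have := P.i8 u hu'
      omega

/-- Closure: when no rule applies to any undecided vertex, all undecided
vertices get outcome "never reach the target" and value `0`. -/
lemma closure (P : PartialData g) (hcl : ∀ v, v ∉ P.D → ¬Rule g P v) :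
    Nonempty (NEData g) := by
  classical
  have esc : ∀ v, v ∉ P.D → ∃ w, w ∈ g.succ v ∧ w ∉ P.D := by
    intro v hv
    have h2 : ¬(∀ w ∈ g.succ v, w ∈ P.D) := fun h => hcl v hv (Or.inr h)
    push_neg at h2
    exact h2
  refine ⟨⟨fun v => if h : v ∈ P.D then P.tau v else (esc v h).choose,
    fun n v => if v ∈ P.D then P.val n v else 0,
    P.rank, ?_, ?_, ?_, ?_, ?_, ?_⟩⟩
  · -- h1
    intro v hvR
    by_cases h : v ∈ P.D
    · simpa [h] using (P.i2 v h hvR).1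
    · simpa [h] using (esc v h).choose_spec.1
  · -- h2
    intro v hv n
    simp only [if_pos (P.iR hv)]
    exact P.i3 v hv n
  · -- h3
    intro v hvR n
    by_cases h : v ∈ P.D
    · have h1 := P.i2 v h hvR
      simp only [if_pos h, dif_pos h, if_pos h1.2.1]
      exact P.i4 v h hvR n
    · have h1 := (esc v h).choose_spec
      simp only [if_neg h, dif_neg h, if_neg h1.2]
  · -- h4
    intro v hvR w hw
    by_cases h : v ∈ P.D
    · rcases P.i5 v h hvR with ⟨hre, h1⟩ | hall
      · simp only [if_pos h, h1]
        by_cases hwD : w ∈ P.D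
        · simp only [if_pos hwD]
          rcases P.i7 w hwD (g.owner v) with h2 | h2 | h2 <;> rw [h2] <;> norm_num
        · simp only [if_neg hwD]; norm_num
      · have h1 := hall w hw
        simp only [if_pos h, if_pos h1.1]
        exact h1.2.1
    · simp only [if_neg h]
      by_cases hwD : w ∈ P.D
      · simp only [if_pos hwD]
        cases hb : g.reacher (g.owner v) with
        | true =>
          have hne1 : P.val (g.owner v) w ≠ 1 := by
            intro h1
            exact hcl v h (Or.inl ⟨hb, w, hw, hwD, h1⟩)
          have h2 := P.i7r w hwD (g.owner v) hb
          rcases P.i7 w hwD (g.owner v) with h3 | h3 | h3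
          · rw [h3]; norm_num
          · rw [h3]
          · exact absurd h3 hne1
        | false => exact P.i7a w hwD (g.owner v) hb
      · simp only [if_neg hwD]
        exact le_rfl
  · -- h5
    intro n v hvR hne0
    by_cases h : v ∈ P.D
    · have h1 := P.i2 v h hvR
      simpa [h, h1.2.1] using h1.2.2
    · simp only [if_neg h] at hne0
      exact absurd rfl hne0
  · -- h6
    intro v hvR hneg w hw
    by_cases h : v ∈ P.D
    · simp only [h, if_true] at hneg
      rcases P.i5 v h hvR with ⟨hre, h1⟩ | hall
      · rw [h1] at hneg; norm_num at hneg
      · exact (hall w hw).2.2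
    · simp [h] at hneg

/-- The construction terminates: some `NEData` exists. -/
lemma exists_NEData : Nonempty (NEData g) := by
  classical
  suffices h : ∀ (k : ℕ) (P : PartialData g), (Finset.univ \ P.D).card ≤ k →
      Nonempty (NEData g) by
    exact h (Finset.univ \ (initPartial g).D).card (initPartial g) le_rfl
  intro k
  induction k with
  | zero =>
    intro P hP
    refine closure g P (fun v hv => ?_)
    intro _
    have hmem : v ∈ Finset.univ \ P.D := Finset.mem_sdiff.mpr ⟨Finset.mem_univ v, hv⟩
    rw [Finset.card_eq_zero.mp (Nat.le_zero.mp hP)] at hmem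
    exact absurd hmem (Finset.notMem_empty v)
  | succ k ih =>
    intro P hP
    by_cases hex : ∃ v, v ∉ P.D ∧ Rule g P v
    · obtain ⟨v, hv, hrule⟩ := hex
      obtain ⟨P', hP'⟩ := extend g P v hv hrule
      refine ih P' ?_
      have heq : Finset.univ \ P'.D = (Finset.univ \ P.D).erase v := by
        rw [hP']
        ext u
        simp only [Finset.mem_sdiff, Finset.mem_univ, true_and, Finset.mem_erase,
          Finset.mem_insert]
        tauto
      have hlt : (Finset.univ \ P'.D).card < (Finset.univ \ P.D).card := by
        rw [heq]
        exact Finset.card_erase_lt_of_mem (Finset.mem_sdiff.mpr ⟨Finset.mem_univ v, hv⟩)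
      omega
    · push_neg at hex
      exact closure g P hex

/-! ### The equilibrium profile and its play -/

variable {g}

/-- The memoryless profile induced by the pointer. -/
def hatProfile (nd : NEData g) : Fin N → Strat V := fun _ _ v => nd.tau v

/-- The one-step dynamics of the equilibrium profile (history-free). -/
def stepf (nd : NEData g) : Option V → Option V := fun s =>
  match s with
  | none => none
  | some v => if v ∈ g.totalTarget then none else some (nd.tau v)

lemma step_hat (nd : NEData g) (h : List (Option V)) (s : Option V) :
    g.step (hatProfile nd) h s = stepf nd s := by
  cases s <;> rfl

lemma playAux_hat (nd : NEData g) :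
    ∀ (t : ℕ) (h : List (Option V)) (s : Option V),
      g.playAux (hatProfile nd) t h s = (stepf nd)^[t] s := by
  intro t
  induction t with
  | zero => intro h s; rfl
  | succ t ih =>
    intro h s
    rw [playAux_succ, ih, step_hat, Function.iterate_succ_apply]

lemma play_hat (nd : NEData g) (s₀ : Option V) (t : ℕ) :
    g.play (hatProfile nd) s₀ t = (stepf nd)^[t] s₀ :=
  playAux_hat nd t [] s₀

lemma stepf_iterate_none (nd : NEData g) : ∀ t : ℕ, (stepf nd)^[t] none = none := by
  intro t
  induction t with
  | zero => rfl
  | succ t ih => rw [Function.iterate_succ_apply]; exact ih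

/-- Along the equilibrium play, values are constant. -/
lemma val_const (nd : NEData g) (n : Fin N) :
    ∀ (t : ℕ) (v u : V), (stepf nd)^[t] (some v) = some u → nd.val n u = nd.val n v := by
  intro t
  induction t with
  | zero => intro v u h; injection h with h; rw [h]
  | succ t ih =>
    intro v u h
    rw [Function.iterate_succ_apply] at h
    by_cases hR : v ∈ g.totalTarget
    · have : stepf nd (some v) = none := by simp [stepf, hR]
      rw [this, stepf_iterate_none] at h
      exact absurd h (by simp)
    · have : stepf nd (some v) = some (nd.tau v) := by simp [stepf, hR]
      rw [this] at h
      rw [ih (nd.tau v) u h, nd.h3 v hR n]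

/-- From a vertex of nonzero value, the equilibrium play reaches the target. -/
lemma hits_of_val_ne (nd : NEData g) (n : Fin N) (v : V) (hne : nd.val n v ≠ 0) :
    ∃ T r, (stepf nd)^[T] (some v) = some r ∧ r ∈ g.totalTarget := by
  suffices h : ∀ k, ∀ v : V, nd.rank v < k → nd.val n v ≠ 0 →
      ∃ T r, (stepf nd)^[T] (some v) = some r ∧ r ∈ g.totalTarget by
    exact h (nd.rank v + 1) v (Nat.lt_succ_self _) hne
  intro k
  induction k with
  | zero => intro v hv; omega
  | succ k ih =>
    intro v hv hne
    by_cases hR : v ∈ g.totalTarget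
    · exact ⟨0, v, rfl, hR⟩
    · have hrk : nd.rank (nd.tau v) < k := by
        have := nd.h5 n v hR hne
        omega
      have hne' : nd.val n (nd.tau v) ≠ 0 := by rw [← nd.h3 v hR n]; exact hne
      obtain ⟨T, r, hT, hr⟩ := ih (nd.tau v) hrk hne'
      refine ⟨T + 1, r, ?_, hr⟩
      rw [Function.iterate_succ_apply]
      have : stepf nd (some v) = some (nd.tau v) := by simp [stepf, hR]
      rw [this]
      exact hT

/-- The value of a state (`0` at the terminal state). -/
def optVal (nd : NEData g) (n : Fin N) : Option V → ℝ :=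
  fun s => match s with
  | none => 0
  | some v => nd.val n v

/-- The equilibrium qualitative payoff equals the constructed value. -/
lemma Qtil_hat (nd : NEData g) (n : Fin N) (s₀ : Option V) :
    g.Qtil n s₀ (hatProfile nd) = optVal nd n s₀ := by
  classical
  cases s₀ with
  | none =>
    refine g.Qtil_of_nohit (hatProfile nd) n none (fun t v h => ?_)
    rw [play_hat, stepf_iterate_none] at h
    exact absurd h (by simp)
  | some v =>
    by_cases hall : ∃ t, ∃ r, g.play (hatProfile nd) (some v) t = some r ∧ r ∈ g.totalTarget
    · obtain ⟨r, hT, hr⟩ := Nat.find_spec hall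
      have hQ := g.Qtil_of_hit (hatProfile nd) n (some v) (Nat.find hall) r hT hr
        (fun t ht u hu hmem => Nat.find_min hall ht ⟨u, hu, hmem⟩)
      rw [hQ, ← nd.h2 r hr n]
      show nd.val n r = optVal nd n (some v)
      show nd.val n r = nd.val n v
      exact val_const nd n (Nat.find hall) v r (by rw [← play_hat]; exact hT)
    · have hv0 : nd.val n v = 0 := by
        by_contra hne
        obtain ⟨T, r, hT, hr⟩ := hits_of_val_ne nd n v hne
        exact hall ⟨T, r, by rw [play_hat]; exact hT, hr⟩
      rw [g.Qtil_of_nohit (hatProfile nd) n (some v)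
        (fun t u hu hmem => hall ⟨t, u, hu, hmem⟩)]
      show (0 : ℝ) = nd.val n v
      rw [hv0]

/-! ### Deviations cannot improve -/

section Deviation

variable (nd : NEData g) (n : Fin N) (σn : Strat V) (s₀ : Option V)

/-- One step of the deviated play: the deviator's value does not increase, and
if it is negative, the rank strictly decreases. -/
lemma dev_step (hval : g.ValidStrat n σn) (t : ℕ) (v : V)
    (hp : g.play (Function.update (hatProfile nd) n σn) s₀ t = some v)
    (hvR : v ∉ g.totalTarget) :
    ∃ w : V, g.play (Function.update (hatProfile nd) n σn) s₀ (t + 1) = some w ∧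
      nd.val n w ≤ nd.val n v ∧ (nd.val n v < 0 → nd.rank w < nd.rank v) := by
  obtain ⟨h, e⟩ := g.play_step (Function.update (hatProfile nd) n σn) s₀ t
  rw [hp, step_some', if_neg hvR] at e
  by_cases ho : g.owner v = n
  · rw [ho, Function.update_self] at e
    have hw : σn h v ∈ g.succ v := hval h v ho hvR
    refine ⟨σn h v, e, ?_, ?_⟩
    · have := nd.h4 v hvR (σn h v) hw
      rwa [ho] at this
    · intro hneg
      exact nd.h6 v hvR (by rwa [ho]) (σn h v) hw
  · rw [Function.update_of_ne ho] at e
    have : hatProfile nd (g.owner v) h v = nd.tau v := rfl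
    rw [this] at e
    refine ⟨nd.tau v, e, le_of_eq (nd.h3 v hvR n).symm, ?_⟩
    intro hneg
    exact nd.h5 n v hvR (ne_of_lt hneg)

/-- Along a deviated play that has not yet reached the target, the deviator's
value does not increase. -/
lemma dev_mono (hval : g.ValidStrat n σn) (T : ℕ)
    (hpre : ∀ t, t < T → ∀ v, g.play (Function.update (hatProfile nd) n σn) s₀ t = some v →
      v ∉ g.totalTarget) :
    optVal nd n (g.play (Function.update (hatProfile nd) n σn) s₀ T) ≤ optVal nd n s₀ := by
  induction T with
  | zero => exact le_of_eq rfl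
  | succ T ih =>
    have hpre' : ∀ t, t < T → ∀ v,
        g.play (Function.update (hatProfile nd) n σn) s₀ t = some v →
        v ∉ g.totalTarget := fun t ht => hpre t (Nat.lt_succ_of_lt ht)
    refine le_trans ?_ (ih hpre')
    cases hp : g.play (Function.update (hatProfile nd) n σn) s₀ T with
    | none =>
      obtain ⟨h, e⟩ := g.play_step (Function.update (hatProfile nd) n σn) s₀ T
      rw [hp, step_none'] at e
      rw [e]
    | some v =>
      have hvR := hpre T (Nat.lt_succ_self T) v hp
      obtain ⟨w, e, hle, _⟩ := dev_step nd n σn s₀ hval T v hp hvR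
      rw [e]
      exact hle

/-- Deviating cannot give the deviator more than the constructed value. -/
lemma Qtil_dev_le (hval : g.ValidStrat n σn) :
    g.Qtil n s₀ (Function.update (hatProfile nd) n σn) ≤ optVal nd n s₀ := by
  classical
  by_cases hex : ∃ t, ∃ r, g.play (Function.update (hatProfile nd) n σn) s₀ t = some r ∧
      r ∈ g.totalTarget
  · obtain ⟨r, hT, hr⟩ := Nat.find_spec hex
    have hQ := g.Qtil_of_hit (Function.update (hatProfile nd) n σn) n s₀ (Nat.find hex) r hT hr
      (fun t ht u hu hmem => Nat.find_min hex ht ⟨u, hu, hmem⟩)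
    rw [hQ, ← nd.h2 r hr n]
    have := dev_mono nd n σn s₀ hval (Nat.find hex)
      (fun t ht u hu hmem => Nat.find_min hex ht ⟨u, hu, hmem⟩)
    rw [hT] at this
    exact this
  · push_neg at hex
    rw [g.Qtil_of_nohit (Function.update (hatProfile nd) n σn) n s₀
      (fun t u hu => hex t u hu)]
    cases s₀ with
    | none => exact le_of_eq rfl
    | some v =>
      show (0 : ℝ) ≤ nd.val n v
      by_contra hneg
      push_neg at hneg
      have key : ∀ t, ∃ u, g.play (Function.update (hatProfile nd) n σn) (some v) t = some u ∧
          nd.val n u < 0 ∧ nd.rank u + t ≤ nd.rank v := by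
        intro t
        induction t with
        | zero => exact ⟨v, rfl, hneg, by omega⟩
        | succ t ih =>
          obtain ⟨u, hu, hlt, hrk⟩ := ih
          have huR : u ∉ g.totalTarget := hex t u hu
          obtain ⟨w, e, hle, hrkdec⟩ := dev_step nd n σn (some v) hval t u hu huR
          exact ⟨w, e, lt_of_le_of_lt hle hlt, by have := hrkdec hlt; omega⟩
      obtain ⟨u, -, -, habs⟩ := key (nd.rank v + 1)
      omega

end Deviation
end MPRS

/-- Every qualitative MPRS game has a Nash equilibrium in deterministic
memoryless strategies. -/
theorem qualitative_MPRS_has_memoryless_NE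
    {V : Type} [Fintype V] [DecidableEq V] {N : ℕ} (g : MPRS V N) :
    ∃ σhat : Fin N → MPRS.Strat V,
      (∀ n, g.ValidStrat n (σhat n)) ∧
      (∀ n, MPRS.Memoryless (σhat n)) ∧
      (∀ (n : Fin N) (s₀ : Option V) (σn : MPRS.Strat V), g.ValidStrat n σn →
        g.Qtil n s₀ (Function.update σhat n σn) ≤ g.Qtil n s₀ σhat) := by
  obtain ⟨nd⟩ := MPRS.exists_NEData g
  refine ⟨MPRS.hatProfile nd, ?_, ?_, ?_⟩
  · intro n h v hown hvR
    exact nd.h1 v hvR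
  · intro n h h' v
    rfl
  · intro n s₀ σn hvalid
    calc g.Qtil n s₀ (Function.update (MPRS.hatProfile nd) n σn)
        ≤ MPRS.optVal nd n s₀ := MPRS.Qtil_dev_le nd n σn s₀ hvalid
      _ = g.Qtil n s₀ (MPRS.hatProfile nd) := (MPRS.Qtil_hat nd n s₀).symm
end

section
/- Every reach-a-set (RAS) game — a qualitative MPRS game in which every player is a reacher — has a Nash equilibrium in deterministic memoryless strategies: there exists a memoryless deterministic strategy profile σ̂ such that for every player n, every initial state s₀, and every (possibly history-dependent) deterministic strategy σ^n of player n, Q̃^n(s₀, σ̂^n, σ̂^{-n}) ≥ Q̃^n(s₀, σ^n, σ̂^{-n}), where here Q̃^n(s₀,σ) = 1 if the play induced by σ from s₀ contains a state of R_n and Q̃^n(s₀,σ) = 0 otherwise. -/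
/-- The qualitative payoff of a reach-a-set (RAS) game: `1` if the induced play
contains a state of `Rₙ` and `0` otherwise. -/
noncomputable def MPRS.Qras {V : Type} [Fintype V] [DecidableEq V] {N : ℕ}
    (g : MPRS V N) (n : Fin N) (s₀ : Option V) (σ : Fin N → MPRS.Strat V) : ℝ :=
  @ite ℝ (∃ (t : ℕ) (v : V), g.play σ s₀ t = some v ∧ v ∈ g.target n)
    (Classical.propDecidable _) 1 0

open Finset in
private lemma ras_extend {V : Type} [Fintype V] [DecidableEq V] {N : ℕ} (g : MPRS V N) :
    ∀ (k : ℕ) (D : Finset V) (c : V → V) (w : V → Finset (Fin N)) (ρ : V → ℕ),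
      Dᶜ.card ≤ k →
      g.totalTarget ⊆ D →
      (∀ v ∈ g.totalTarget, w v = Finset.univ.filter (fun n => v ∈ g.target n)) →
      (∀ v ∈ D, v ∉ g.totalTarget →
        c v ∈ g.succ v ∧ c v ∈ D ∧ w (c v) = w v ∧ ρ (c v) < ρ v) →
      (∀ v ∈ D, v ∉ g.totalTarget → g.owner v ∉ w v →
        ∀ u ∈ g.succ v, u ∈ D ∧ g.owner v ∉ w u) →
      ∃ (c' : V → V) (w' : V → Finset (Fin N)) (ρ' : V → ℕ),
        (∀ v, v ∉ g.totalTarget → c' v ∈ g.succ v) ∧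
        (∀ v ∈ g.totalTarget, w' v = Finset.univ.filter (fun n => v ∈ g.target n)) ∧
        (∀ v, v ∉ g.totalTarget → w' (c' v) = w' v) ∧
        (∀ v, v ∉ g.totalTarget → ∀ u ∈ g.succ v, g.owner v ∉ w' v → g.owner v ∉ w' u) ∧
        (∀ v, v ∉ g.totalTarget → (w' v).Nonempty → ρ' (c' v) < ρ' v) := by
  intro k
  induction k with
  | zero =>
    intro D c w ρ hcard hsub hwR hchain hstar
    -- D = univ; fixed point case is impossible to have v ∉ D; but we still need the
    -- fixed-point construction: every v is in D.
    have hD : ∀ v : V, v ∈ D := by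
      intro v
      by_contra hv
      have : v ∈ Dᶜ := Finset.mem_compl.mpr hv
      have := Finset.card_pos.mpr ⟨v, this⟩
      omega
    refine ⟨c, w, ρ, ?_, ?_, ?_, ?_, ?_⟩
    · intro v hv; exact (hchain v (hD v) hv).1
    · exact hwR
    · intro v hv; exact (hchain v (hD v) hv).2.2.1
    · intro v hv u hu hov; exact (hstar v (hD v) hv hov u hu).2
    · intro v hv _; exact (hchain v (hD v) hv).2.2.2
  | succ k ih =>
    intro D c w ρ hcard hsub hwR hchain hstar
    by_cases hex : ∃ v, v ∉ D ∧ ((∃ u ∈ g.succ v, u ∈ D ∧ g.owner v ∈ w u) ∨ ∀ u ∈ g.succ v, u ∈ D)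
    · obtain ⟨v, hvD, hcase⟩ := hex
      have hvR : v ∉ g.totalTarget := fun h => hvD (hsub h)
      -- choose u₀
      obtain ⟨u₀, hu₀s, hu₀D, hgood⟩ :
          ∃ u₀, u₀ ∈ g.succ v ∧ u₀ ∈ D ∧
            (g.owner v ∈ w u₀ ∨ ((∀ u ∈ g.succ v, u ∈ D) ∧ ∀ u ∈ g.succ v, g.owner v ∉ w u)) := by
        by_cases hA : ∃ u ∈ g.succ v, u ∈ D ∧ g.owner v ∈ w u
        · obtain ⟨u₀, h1, h2, h3⟩ := hA
          exact ⟨u₀, h1, h2, Or.inl h3⟩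
        · have hB : ∀ u ∈ g.succ v, u ∈ D := by
            rcases hcase with h | h
            · exact absurd h hA
            · exact h
          push_neg at hA
          obtain ⟨u₀, h1⟩ := g.succ_nonempty v
          exact ⟨u₀, h1, hB u₀ h1, Or.inr ⟨hB, fun u hu hmem => hA u hu (hB u hu) hmem⟩⟩
      have hne : ∀ u ∈ D, u ≠ v := fun u hu h => hvD (h ▸ hu)
      refine ih (insert v D) (Function.update c v u₀) (Function.update w v (w u₀))
        (Function.update ρ v (ρ u₀ + 1)) ?_ ?_ ?_ ?_ ?_
      · rw [Finset.compl_insert]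
        have : v ∈ Dᶜ := Finset.mem_compl.mpr hvD
        rw [Finset.card_erase_of_mem this]
        omega
      · exact hsub.trans (Finset.subset_insert v D)
      · intro u hu
        rw [Function.update_of_ne (hne u (hsub hu))]
        exact hwR u hu
      · intro x hx hxR
        rcases Finset.mem_insert.mp hx with rfl | hxD
        · rw [Function.update_self, Function.update_self, Function.update_of_ne (hne u₀ hu₀D),
            Function.update_of_ne (hne u₀ hu₀D), Function.update_self]
          exact ⟨hu₀s, Finset.mem_insert_of_mem hu₀D, rfl, Nat.lt_succ_self _⟩
        · obtain ⟨h1, h2, h3, h4⟩ := hchain x hxD hxR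
          rw [Function.update_of_ne (hne x hxD), Function.update_of_ne (hne x hxD),
            Function.update_of_ne (hne x hxD), Function.update_of_ne (hne (c x) h2),
            Function.update_of_ne (hne (c x) h2)]
          exact ⟨h1, Finset.mem_insert_of_mem h2, h3, h4⟩
      · intro x hx hxR hox u hu
        rcases Finset.mem_insert.mp hx with rfl | hxD
        · rw [Function.update_self] at hox
          rcases hgood with hwin | ⟨hall, hloss⟩
          · exact absurd hwin hox
          · refine ⟨Finset.mem_insert_of_mem (hall u hu), ?_⟩
            rw [Function.update_of_ne (hne u (hall u hu))]
            exact hloss u hu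
        · rw [Function.update_of_ne (hne x hxD)] at hox
          obtain ⟨h1, h2⟩ := hstar x hxD hxR hox u hu
          refine ⟨Finset.mem_insert_of_mem h1, ?_⟩
          rw [Function.update_of_ne (hne u h1)]
          exact h2
    · -- fixed point
      push_neg at hex
      have hfix : ∀ v, v ∉ D → (∀ u ∈ g.succ v, u ∈ D → g.owner v ∉ w u) ∧ ∃ u ∈ g.succ v, u ∉ D := by
        intro v hv
        obtain ⟨h1, h2⟩ := hex v hv
        exact ⟨h1, h2⟩
      choose f hf1 hf2 using fun v hv => (hfix v hv).2
      refine ⟨fun x => if hx : x ∈ D then c x else f x hx,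
        fun x => if x ∈ D then w x else ∅, ρ, ?_, ?_, ?_, ?_, ?_⟩
      · intro x hx
        by_cases hxD : x ∈ D
        · simp only [hxD, dif_pos]; exact (hchain x hxD hx).1
        · simp only [hxD, dif_neg, not_false_iff]; exact hf1 x hxD
      · intro x hx
        have hxD : x ∈ D := hsub hx
        simp only [hxD, if_pos]
        exact hwR x hx
      · intro x hx
        by_cases hxD : x ∈ D
        · obtain ⟨h1, h2, h3, h4⟩ := hchain x hxD hx
          simp only [hxD, dif_pos, if_pos, h2]
          exact h3
        · have : f x hxD ∉ D := hf2 x hxD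
          simp only [hxD, dif_neg, not_false_iff, if_neg, this]
      · intro x hx u hu hox
        by_cases hxD : x ∈ D
        · simp only [hxD, if_pos] at hox
          obtain ⟨h1, h2⟩ := hstar x hxD hx hox u hu
          simp only [h1, if_pos]
          exact h2
        · by_cases huD : u ∈ D
          · simp only [huD, if_pos]
            exact (hfix x hxD).1 u hu huD
          · simp only [huD, if_neg, not_false_iff]
            exact Finset.notMem_empty _
      · intro x hx hne
        by_cases hxD : x ∈ D
        · simp only [hxD, dif_pos]
          exact (hchain x hxD hx).2.2.2
        · simp only [hxD, if_neg, not_false_iff] at hne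
          exact absurd hne (by simp)

/-- Every reach-a-set (RAS) game — a qualitative MPRS game in which every
player is a reacher — has a Nash equilibrium in deterministic memoryless
strategies. -/
theorem RAS_has_memoryless_NE
    {V : Type} [Fintype V] [DecidableEq V] {N : ℕ} (g : MPRS V N)
    (hras : ∀ n : Fin N, g.reacher n = true) :
    ∃ σhat : Fin N → MPRS.Strat V,
      (∀ n, g.ValidStrat n (σhat n)) ∧
      (∀ n, MPRS.Memoryless (σhat n)) ∧
      (∀ (n : Fin N) (s₀ : Option V) (σn : MPRS.Strat V), g.ValidStrat n σn →
        g.Qras n s₀ (Function.update σhat n σn) ≤ g.Qras n s₀ σhat) := by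
  -- obtain the stable memoryless data (c, w, ρ)
  obtain ⟨c, w, ρ, hc, hwR, hcw, hstar, hrank⟩ :=
    ras_extend g (g.totalTargetᶜ).card g.totalTarget id
      (fun v => Finset.univ.filter (fun n => v ∈ g.target n)) (fun _ => 0)
      le_rfl (le_refl _) (fun v _ => rfl)
      (fun v hv hv' => absurd hv hv') (fun v hv hv' => absurd hv hv')
  -- membership facts about w on the target set
  have hwmem : ∀ v ∈ g.totalTarget, ∀ m : Fin N, (m ∈ w v ↔ v ∈ g.target m) := by
    intro v hv m
    rw [hwR v hv]
    simp
  have htmem : ∀ (m : Fin N) (v : V), v ∈ g.target m → v ∈ g.totalTarget := by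
    intro m v hv
    exact Finset.mem_biUnion.mpr ⟨m, Finset.mem_univ m, hv⟩
  -- the equilibrium profile
  set σhat : Fin N → MPRS.Strat V := fun _ _ v => c v with hσhat
  refine ⟨σhat, ?_, ?_, ?_⟩
  · intro n h v _ hv
    exact hc v hv
  · intro n h h' v
    rfl
  · intro n s₀ σn hσn
    set τ : Fin N → MPRS.Strat V := Function.update σhat n σn with hτ
    -- invariant under deviated play
    set P : Option V → Prop := fun s => ∀ v, s = some v → n ∉ w v with hP
    have hstep : ∀ (h : List (Option V)) (s : Option V), P s → P (g.step τ h s) := by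
      intro h s hPs u hu
      match s with
      | none => simp [MPRS.step] at hu
      | some v =>
        by_cases hvR : v ∈ g.totalTarget
        · simp [MPRS.step, hvR] at hu
        · have hnv : n ∉ w v := hPs v rfl
          have hu' : u = τ (g.owner v) h v := by
            simp [MPRS.step, hvR] at hu
            exact hu.symm
          by_cases hown : g.owner v = n
          · have : τ (g.owner v) = σn := by rw [hown, hτ, Function.update_self]
            rw [hu', this]
            have hsucc : σn h v ∈ g.succ v := hσn h v hown hvR
            have := hstar v hvR (σn h v) hsucc (hown ▸ hnv)
            rwa [hown] at this
          · have : τ (g.owner v) = σhat (g.owner v) := by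
              rw [hτ]; exact Function.update_of_ne hown _ _
            rw [hu', this]
            have : σhat (g.owner v) h v = c v := rfl
            rw [this]
            rw [hcw v hvR]
            exact hnv
    have hplayinv : ∀ (t : ℕ) (h : List (Option V)) (s : Option V), P s → P (g.playAux τ t h s) := by
      intro t
      induction t with
      | zero => intro h s hPs; exact hPs
      | succ t ih =>
        intro h s hPs
        exact ih (h ++ [s]) (g.step τ h s) (hstep h s hPs)
    -- memoryless play is iteration
    set F : Option V → Option V := fun s => g.step σhat [] s with hF
    have hstepmem : ∀ (h : List (Option V)) (s : Option V), g.step σhat h s = F s := by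
      intro h s
      match s with
      | none => rfl
      | some v => rfl
    have hmemplay : ∀ (t : ℕ) (h : List (Option V)) (s : Option V),
        g.playAux σhat t h s = F^[t] s := by
      intro t
      induction t with
      | zero => intro h s; rfl
      | succ t ih =>
        intro h s
        show g.playAux σhat t (h ++ [s]) (g.step σhat h s) = F^[t+1] s
        rw [ih, hstepmem, Function.iterate_succ_apply]
    -- reachability under σhat from winning states
    have hreach : ∀ (m : ℕ) (v : V), ρ v ≤ m → n ∈ w v →
        ∃ (t : ℕ) (u : V), F^[t] (some v) = some u ∧ u ∈ g.target n := by
      intro m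
      induction m with
      | zero =>
        intro v hv hn
        by_cases hvR : v ∈ g.totalTarget
        · exact ⟨0, v, rfl, (hwmem v hvR n).mp hn⟩
        · have := hrank v hvR ⟨n, hn⟩
          omega
      | succ m ih =>
        intro v hv hn
        by_cases hvR : v ∈ g.totalTarget
        · exact ⟨0, v, rfl, (hwmem v hvR n).mp hn⟩
        · have hlt := hrank v hvR ⟨n, hn⟩
          have hn' : n ∈ w (c v) := (hcw v hvR).symm ▸ hn
          obtain ⟨t, u, h1, h2⟩ := ih (c v) (by omega) hn'
          refine ⟨t + 1, u, ?_, h2⟩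
          rw [Function.iterate_succ_apply]
          have : F (some v) = some (c v) := by
            simp [hF, MPRS.step, hvR, hσhat]
          rw [this]
          exact h1
    -- Qras is 0 or 1
    have hQras01 : ∀ σ : Fin N → MPRS.Strat V, g.Qras n s₀ σ = 1 ∨ g.Qras n s₀ σ = 0 := by
      intro σ
      unfold MPRS.Qras
      split_ifs with h
      · exact Or.inl rfl
      · exact Or.inr rfl
    by_cases hwin : ∃ v, s₀ = some v ∧ n ∈ w v
    · obtain ⟨v, rfl, hnv⟩ := hwin
      have hcond : ∃ (t : ℕ) (u : V), g.play σhat (some v) t = some u ∧ u ∈ g.target n := by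
        obtain ⟨t, u, h1, h2⟩ := hreach (ρ v) v le_rfl hnv
        exact ⟨t, u, by rw [MPRS.play, hmemplay]; exact h1, h2⟩
      have h1 : g.Qras n (some v) σhat = 1 := by
        unfold MPRS.Qras
        rw [if_pos hcond]
      rw [h1]
      rcases hQras01 τ with h | h <;> rw [h]
      · norm_num
    · have hPs₀ : P s₀ := by
        intro v hv
        intro hnv
        exact hwin ⟨v, hv, hnv⟩
      have hcond : ¬ ∃ (t : ℕ) (u : V), g.play τ s₀ t = some u ∧ u ∈ g.target n := by
        rintro ⟨t, u, h1, h2⟩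
        have := hplayinv t [] s₀ hPs₀ u h1
        exact this ((hwmem u (htmem n u h2) n).mpr h2)
      have h0 : g.Qras n s₀ τ = 0 := by
        unfold MPRS.Qras
        rw [if_neg hcond]
      rw [h0]
      rcases hQras01 σhat with h | h <;> rw [h] <;> norm_num
end

section
/- Every stay-in-a-set (SIAS) game — a qualitative MPRS game in which every player is an avoider — has a Nash equilibrium in deterministic memoryless strategies: there exists a memoryless deterministic strategy profile σ̂ such that for every player n, every initial state s₀, and every (possibly history-dependent) deterministic strategy σ^n of player n, Q̃^n(s₀, σ̂^n, σ̂^{-n}) ≥ Q̃^n(s₀, σ^n, σ̂^{-n}), where here Q̃^n(s₀,σ) = −1 if the play induced by σ from s₀ contains a state of R_n and Q̃^n(s₀,σ) = 0 otherwise. -/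
/-- The qualitative payoff of a stay-in-a-set (SIAS) game: `-1` if the induced
play contains a state of `Rₙ` and `0` otherwise. -/
noncomputable def MPRS.Qsias {V : Type} [Fintype V] [DecidableEq V] {N : ℕ}
    (g : MPRS V N) (n : Fin N) (s₀ : Option V) (σ : Fin N → MPRS.Strat V) : ℝ :=
  @ite ℝ (∃ (t : ℕ) (v : V), g.play σ s₀ t = some v ∧ v ∈ g.target n)
    (Classical.propDecidable _) (-1) 0

namespace SIASProof

open MPRS

variable {V : Type} [Fintype V] [DecidableEq V] {N : ℕ}

/-- `Yk g k` : set of vertices from which every path hits the total target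
within `k` steps. -/
def Yk (g : MPRS V N) : ℕ → Finset V
  | 0 => g.totalTarget
  | k + 1 => Yk g k ∪ Finset.univ.filter (fun v => g.succ v ⊆ Yk g k)

lemma Yk_mono_succ (g : MPRS V N) (k : ℕ) : Yk g k ⊆ Yk g (k + 1) := by
  intro v hv; simp [Yk]; exact Or.inl hv

lemma Yk_mono (g : MPRS V N) {k m : ℕ} (h : k ≤ m) : Yk g k ⊆ Yk g m := by
  induction m with
  | zero => simpa [Nat.le_zero.mp h] using Finset.Subset.refl _
  | succ m ih =>
    rcases Nat.lt_or_ge k (m + 1) with h' | h'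
    · exact (ih (Nat.lt_succ_iff.mp h')).trans (Yk_mono_succ g m)
    · have : k = m + 1 := le_antisymm h h'
      simp [this]

lemma Yk_step_eq (g : MPRS V N) {k : ℕ} (h : Yk g k = Yk g (k + 1)) :
    Yk g (k + 1) = Yk g (k + 2) := by
  have : Yk g (k + 2) = Yk g (k+1) ∪ Finset.univ.filter (fun v => g.succ v ⊆ Yk g (k+1)) := rfl
  rw [this, ← h]
  exact h

lemma Yk_stab_of_eq (g : MPRS V N) {k : ℕ} (h : Yk g k = Yk g (k + 1)) :
    ∀ m, k ≤ m → Yk g m = Yk g k := by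
  intro m hm
  induction m with
  | zero => simp [Nat.le_zero.mp hm]
  | succ m ih =>
    rcases Nat.lt_or_ge k (m + 1) with h' | h'
    · have hmk : k ≤ m := Nat.lt_succ_iff.mp h'
      have hmm : Yk g m = Yk g k := ih hmk
      have h2 : Yk g (m + 1) = Yk g m ∪ Finset.univ.filter (fun v => g.succ v ⊆ Yk g m) := rfl
      have h3 : Yk g (k + 1) = Yk g k ∪ Finset.univ.filter (fun v => g.succ v ⊆ Yk g k) := rfl
      rw [h2, hmm, ← h3, ← h]
    · have : k = m + 1 := le_antisymm hm h'
      simp [this]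

/-- The set `Y` of vertices from which every path eventually hits the total
target. -/
def Yset (g : MPRS V N) : Finset V := Yk g (Fintype.card V)

lemma Yk_card_lt (g : MPRS V N) :
    ∀ k : ℕ, (∀ j < k, Yk g j ≠ Yk g (j + 1)) → k ≤ (Yk g k).card := by
  intro k
  induction k with
  | zero => intro _; exact Nat.zero_le _
  | succ k ih =>
    intro h
    have h1 : k ≤ (Yk g k).card := ih (fun j hj => h j (Nat.lt_succ_of_lt hj))
    have h2 : Yk g k ≠ Yk g (k + 1) := h k (Nat.lt_succ_self k)
    have h3 : Yk g k ⊂ Yk g (k + 1) := ssubset_of_ne_of_subset h2 (Yk_mono_succ g k)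
    have := Finset.card_lt_card h3
    omega

lemma Yk_fixed (g : MPRS V N) :
    Yk g (Fintype.card V + 1) = Yset g := by
  by_cases h : ∀ j < Fintype.card V, Yk g j ≠ Yk g (j + 1)
  · by_contra hne
    have h' : ∀ j < Fintype.card V + 1, Yk g j ≠ Yk g (j + 1) := by
      intro j hj
      rcases Nat.lt_or_ge j (Fintype.card V) with hj' | hj'
      · exact h j hj'
      · have : j = Fintype.card V := by omega
        rw [this]; exact fun he => hne he.symm
    have := Yk_card_lt g (Fintype.card V + 1) h'
    have hle : (Yk g (Fintype.card V + 1)).card ≤ Fintype.card V :=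
      Finset.card_le_card (Finset.subset_univ _) |>.trans (by simp)
    omega
  · push_neg at h
    obtain ⟨j, hj, hje⟩ := h
    have := Yk_stab_of_eq g hje
    rw [this (Fintype.card V + 1) (by omega), Yset, this (Fintype.card V) (by omega)]

lemma mem_Yset_of_mem_Yk (g : MPRS V N) {v : V} {k : ℕ} (h : v ∈ Yk g k) :
    v ∈ Yset g := by
  rcases Nat.lt_or_ge k (Fintype.card V) with h' | h'
  · exact Yk_mono g h'.le h
  · rcases Nat.lt_or_ge (Fintype.card V) k with h'' | h''
    · -- k > card V : Yk g k = Yset g by stabilization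
      have hstab := Yk_stab_of_eq g (Yk_fixed g).symm
      have := hstab k (by omega)
      rw [this] at h
      exact h
    · have : k = Fintype.card V := by omega
      rw [this] at h; exact h

lemma target_subset_Yset (g : MPRS V N) : g.totalTarget ⊆ Yset g :=
  Yk_mono g (Nat.zero_le _)

lemma notY_succ (g : MPRS V N) {v : V} (h : v ∉ Yset g) :
    ∃ w ∈ g.succ v, w ∉ Yset g := by
  by_contra hc
  push_neg at hc
  have : v ∈ Yk g (Fintype.card V + 1) := by
    show v ∈ Yk g (Fintype.card V) ∪ _
    refine Finset.mem_union_right _ ?_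
    simp only [Finset.mem_filter, Finset.mem_univ, true_and]
    intro w hw; exact hc w hw
  rw [Yk_fixed] at this
  exact h this

lemma notY_notR (g : MPRS V N) {v : V} (h : v ∉ Yset g) : v ∉ g.totalTarget :=
  fun hr => h (target_subset_Yset g hr)

/-- Rank of a vertex : least `k` with `v ∈ Yk g k`. -/
noncomputable def rank (g : MPRS V N) (v : V) : ℕ :=
  sInf {k | v ∈ Yk g k}

lemma rank_spec (g : MPRS V N) {v : V} (h : v ∈ Yset g) :
    v ∈ Yk g (rank g v) ∧ ∀ j < rank g v, v ∉ Yk g j := by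
  have hex : {k | v ∈ Yk g k}.Nonempty := ⟨Fintype.card V, h⟩
  exact ⟨Nat.sInf_mem hex, fun j hj => Nat.notMem_of_lt_sInf hj⟩

lemma rank_le (g : MPRS V N) {v : V} {k : ℕ} (h : v ∈ Yk g k) : rank g v ≤ k :=
  Nat.sInf_le h

lemma rank_succ (g : MPRS V N) {v : V} (hY : v ∈ Yset g) (hR : v ∉ g.totalTarget) :
    ∃ k, rank g v = k + 1 ∧ g.succ v ⊆ Yk g k := by
  obtain ⟨h1, h2⟩ := rank_spec g hY
  cases hrk : rank g v with
  | zero => rw [hrk] at h1; exact absurd h1 hR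
  | succ k =>
    refine ⟨k, rfl, ?_⟩
    rw [hrk] at h1 h2
    have hnot : v ∉ Yk g k := h2 k (Nat.lt_succ_self k)
    rcases Finset.mem_union.mp h1 with h | h
    · exact absurd h hnot
    · simp only [Finset.mem_filter, Finset.mem_univ, true_and] at h
      exact h

lemma succ_mem_Y_rank_lt (g : MPRS V N) {v w : V} (hY : v ∈ Yset g)
    (hR : v ∉ g.totalTarget) (hw : w ∈ g.succ v) :
    w ∈ Yset g ∧ rank g w < rank g v := by
  obtain ⟨k, hk, hsub⟩ := rank_succ g hY hR
  have hwk : w ∈ Yk g k := hsub hw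
  exact ⟨mem_Yset_of_mem_Yk g hwk, by have := rank_le g hwk; omega⟩

/-- The main recursive construction : for each vertex `v`, `pick g v` is a pair
of (the prescribed successor, the outcome set of players whose target gets hit
from `v` under the prescribed profile). -/
noncomputable def pick (g : MPRS V N) (v : V) : V × Finset (Fin N) :=
  if hR : v ∈ g.totalTarget then
    (v, Finset.univ.filter (fun n => v ∈ g.target n))
  else if hY : v ∈ Yset g then
    let cand := (g.succ v).attach.filter (fun w => g.owner v ∉ (pick g w.1).2)
    if hc : cand.Nonempty then
      (hc.choose.1, (pick g hc.choose.1).2)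
    else
      ((g.succ_nonempty v).choose, (pick g (g.succ_nonempty v).choose).2)
  else
    ((notY_succ g hY).choose, ∅)
termination_by rank g v
decreasing_by
  all_goals first
    | exact (succ_mem_Y_rank_lt g hY hR w.2).2
    | exact (succ_mem_Y_rank_lt g hY hR (g.succ_nonempty v).choose_spec).2
    | exact (succ_mem_Y_rank_lt g hY hR (Subtype.prop _)).2

lemma pick_target (g : MPRS V N) {v : V} (hR : v ∈ g.totalTarget) :
    (pick g v).2 = Finset.univ.filter (fun n => v ∈ g.target n) := by
  rw [pick]; simp [hR]

lemma mem_pick_target (g : MPRS V N) {v : V} (hR : v ∈ g.totalTarget) (n : Fin N) :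
    n ∈ (pick g v).2 ↔ v ∈ g.target n := by
  rw [pick_target g hR]; simp

lemma pick_YnotR (g : MPRS V N) {v : V} (hY : v ∈ Yset g) (hR : v ∉ g.totalTarget) :
    (pick g v).1 ∈ g.succ v ∧ (pick g ((pick g v).1)).2 = (pick g v).2 := by
  rw [pick]
  simp only [dif_neg hR, dif_pos hY]
  by_cases hc : ((g.succ v).attach.filter (fun w => g.owner v ∉ (pick g w.1).2)).Nonempty
  · simp only [dif_pos hc]
    exact ⟨hc.choose.2, trivial⟩
  · simp only [dif_neg hc]
    exact ⟨(g.succ_nonempty v).choose_spec, trivial⟩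

lemma pick_owner_mem (g : MPRS V N) {v : V} (hY : v ∈ Yset g) (hR : v ∉ g.totalTarget)
    (hno : g.owner v ∈ (pick g v).2) : ∀ w ∈ g.succ v, g.owner v ∈ (pick g w).2 := by
  by_contra hcon
  push_neg at hcon
  obtain ⟨w, hw, hwo⟩ := hcon
  have hc : ((g.succ v).attach.filter (fun w => g.owner v ∉ (pick g w.1).2)).Nonempty :=
    ⟨⟨w, hw⟩, Finset.mem_filter.mpr ⟨Finset.mem_attach _ _, hwo⟩⟩
  have he : (pick g v).2 = (pick g hc.choose.1).2 := by
    rw [pick]; simp only [dif_neg hR, dif_pos hY, dif_pos hc]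
  have hspec := hc.choose_spec
  rw [Finset.mem_filter] at hspec
  rw [he] at hno
  exact hspec.2 hno

lemma pick_notY (g : MPRS V N) {v : V} (hY : v ∉ Yset g) :
    (pick g v).1 ∈ g.succ v ∧ (pick g v).1 ∉ Yset g := by
  have hR : v ∉ g.totalTarget := notY_notR g hY
  rw [pick]
  simp only [dif_neg hR, dif_neg hY]
  exact (notY_succ g hY).choose_spec

/-! ### Play dynamics lemmas -/

lemma step_none (g : MPRS V N) (σ : Fin N → Strat V) (h : List (Option V)) :
    g.step σ h none = none := rfl

lemma step_some (g : MPRS V N) (σ : Fin N → Strat V) (h : List (Option V)) (v : V) :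
    g.step σ h (some v) =
      if v ∈ g.totalTarget then none else some (σ (g.owner v) h v) := rfl

lemma playAux_none (g : MPRS V N) (σ : Fin N → Strat V) :
    ∀ (t : ℕ) (h : List (Option V)), g.playAux σ t h none = none := by
  intro t
  induction t with
  | zero => intro h; rfl
  | succ t ih =>
    intro h
    show g.playAux σ t (h ++ [none]) (g.step σ h none) = none
    rw [step_none]
    exact ih _

lemma play_none (g : MPRS V N) (σ : Fin N → Strat V) (t : ℕ) :
    g.play σ none t = none := playAux_none g σ t []

lemma playAux_step (g : MPRS V N) (σ : Fin N → Strat V) :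
    ∀ (t : ℕ) (h : List (Option V)) (s : Option V),
      ∃ h', g.playAux σ (t + 1) h s = g.step σ h' (g.playAux σ t h s) := by
  intro t
  induction t with
  | zero => intro h s; exact ⟨h, rfl⟩
  | succ t ih =>
    intro h s
    obtain ⟨h', hh⟩ := ih (h ++ [s]) (g.step σ h s)
    exact ⟨h', hh⟩

lemma play_step (g : MPRS V N) (σ : Fin N → Strat V) (s₀ : Option V) (t : ℕ) :
    ∃ h, g.play σ s₀ (t + 1) = g.step σ h (g.play σ s₀ t) :=
  playAux_step g σ t [] s₀

/-- Generic invariant principle along a play. -/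
lemma play_ind (g : MPRS V N) (σ : Fin N → Strat V) (s₀ : Option V)
    (P : ℕ → Option V → Prop) (h0 : P 0 s₀)
    (hstep : ∀ (t : ℕ) (h : List (Option V)),
      P t (g.play σ s₀ t) → P (t + 1) (g.step σ h (g.play σ s₀ t))) :
    ∀ t, P t (g.play σ s₀ t) := by
  intro t
  induction t with
  | zero => exact h0
  | succ t ih =>
    obtain ⟨h, hh⟩ := play_step g σ s₀ t
    rw [hh]
    exact hstep t h ih

end SIASProof

/-- Every stay-in-a-set (SIAS) game — a qualitative MPRS game in which every
player is an avoider — has a Nash equilibrium in deterministic memoryless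
strategies. -/
theorem SIAS_has_memoryless_NE
    {V : Type} [Fintype V] [DecidableEq V] {N : ℕ} (g : MPRS V N)
    (hsias : ∀ n : Fin N, g.reacher n = false) :
    ∃ σhat : Fin N → MPRS.Strat V,
      (∀ n, g.ValidStrat n (σhat n)) ∧
      (∀ n, MPRS.Memoryless (σhat n)) ∧
      (∀ (n : Fin N) (s₀ : Option V) (σn : MPRS.Strat V), g.ValidStrat n σn →
        g.Qsias n s₀ (Function.update σhat n σn) ≤ g.Qsias n s₀ σhat) := by
  classical
  open SIASProof in
  refine ⟨fun _ => fun _ v => (pick g v).1, ?_, ?_, ?_⟩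
  · -- validity
    intro n h v _ hvR
    by_cases hY : v ∈ Yset g
    · exact (pick_YnotR g hY hvR).1
    · exact (pick_notY g hY).1
  · -- memoryless
    intro n h h' v; rfl
  · -- equilibrium property
    intro n s₀ σn hσn
    set σhat : Fin N → MPRS.Strat V := fun _ => fun _ v => (pick g v).1 with hσhat
    set σ' : Fin N → MPRS.Strat V := Function.update σhat n σn with hσ'
    have key : (∃ t u, g.play σhat s₀ t = some u ∧ u ∈ g.target n) →
        (∃ t u, g.play σ' s₀ t = some u ∧ u ∈ g.target n) := by
      rintro ⟨t, u, hpt, hut⟩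
      have huR : u ∈ g.totalTarget :=
        Finset.mem_biUnion.mpr ⟨n, Finset.mem_univ n, hut⟩
      match s₀ with
      | none =>
        rw [play_none] at hpt
        exact absurd hpt (by simp)
      | some v =>
        by_cases hvY : v ∈ Yset g
        · -- O-set invariance along the σhat-play
          have inv : ∀ t', ∀ w, g.play σhat (some v) t' = some w →
              w ∈ Yset g ∧ (pick g w).2 = (pick g v).2 := by
            have := play_ind g σhat (some v)
              (fun _ s => ∀ w, s = some w →
                w ∈ Yset g ∧ (pick g w).2 = (pick g v).2)
              (by rintro w hw; cases hw; exact ⟨hvY, rfl⟩)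
              (by
                intro t h hP w hw
                cases hs : g.play σhat (some v) t with
                | none => rw [hs, step_none] at hw; exact absurd hw (by simp)
                | some u =>
                  rw [hs, step_some] at hw
                  by_cases huR' : u ∈ g.totalTarget
                  · rw [if_pos huR'] at hw; exact absurd hw (by simp)
                  · rw [if_neg huR'] at hw
                    obtain ⟨huY, hOu⟩ := hP u hs
                    have hww : σhat (g.owner u) h u = (pick g u).1 := rfl
                    rw [hww] at hw
                    cases hw
                    obtain ⟨hsucc, hOeq⟩ := pick_YnotR g huY huR'
                    exact ⟨(succ_mem_Y_rank_lt g huY huR' hsucc).1,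
                      hOeq.trans hOu⟩)
            intro t' w hw
            exact this t' w hw
          obtain ⟨huY, hOu⟩ := inv t u hpt
          have hnv : n ∈ (pick g v).2 := by
            rw [← hOu]
            exact (mem_pick_target g huR n).mpr hut
          -- deviation analysis : player n cannot avoid R_n from v
          have main := play_ind g σ' (some v)
            (fun t s =>
              (∃ u, s = some u ∧ u ∈ Yset g ∧ n ∈ (pick g u).2 ∧
                rank g u + t ≤ rank g v) ∨
              (∃ t' u, g.play σ' (some v) t' = some u ∧ u ∈ g.target n))
            (Or.inl ⟨v, rfl, hvY, hnv, by omega⟩)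
            (by
              intro t h hP
              rcases hP with ⟨u, hu, huY', hnu, hrk⟩ | hr
              · rw [hu]
                by_cases huR' : u ∈ g.totalTarget
                · exact Or.inr ⟨t, u, hu, (mem_pick_target g huR' n).mp hnu⟩
                · left
                  rw [step_some, if_neg huR']
                  have hwsucc : σ' (g.owner u) h u ∈ g.succ u ∧
                      n ∈ (pick g (σ' (g.owner u) h u)).2 := by
                    by_cases how : g.owner u = n
                    · have hupd : σ' (g.owner u) = σn := by
                        rw [hσ', how]; exact Function.update_self _ _ _
                      rw [hupd]
                      refine ⟨hσn h u how huR', ?_⟩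
                      have := pick_owner_mem g huY' huR' (how ▸ hnu)
                        (σn h u) (hσn h u how huR')
                      rwa [how] at this
                    · have hupd : σ' (g.owner u) = σhat (g.owner u) := by
                        rw [hσ']; exact Function.update_of_ne how _ _
                      have hww : σhat (g.owner u) h u = (pick g u).1 := rfl
                      rw [hupd, hww]
                      obtain ⟨hsucc, hOeq⟩ := pick_YnotR g huY' huR'
                      exact ⟨hsucc, hOeq ▸ hnu⟩
                  obtain ⟨hws, hnw⟩ := hwsucc
                  have hwY := succ_mem_Y_rank_lt g huY' huR' hws
                  exact ⟨σ' (g.owner u) h u, rfl, hwY.1, hnw, by omega⟩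
              · exact Or.inr hr)
            (rank g v + 1)
          rcases main with ⟨u', _, _, _, hrk⟩ | hr
          · omega
          · exact hr
        · -- outside Y : σhat-play never hits any target, contradiction
          have inv : ∀ t', ∀ w, g.play σhat (some v) t' = some w → w ∉ Yset g := by
            have := play_ind g σhat (some v)
              (fun _ s => ∀ w, s = some w → w ∉ Yset g)
              (by rintro w hw; cases hw; exact hvY)
              (by
                intro t h hP w hw
                cases hs : g.play σhat (some v) t with
                | none => rw [hs, step_none] at hw; exact absurd hw (by simp)
                | some u =>
                  rw [hs, step_some] at hw
                  have huY := hP u hs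
                  have huR' : u ∉ g.totalTarget := notY_notR g huY
                  rw [if_neg huR'] at hw
                  have hww : σhat (g.owner u) h u = (pick g u).1 := rfl
                  rw [hww] at hw
                  cases hw
                  exact (pick_notY g huY).2)
            intro t' w hw
            exact this t' w hw
          exact absurd (target_subset_Yset g huR) (inv t u hpt)
    -- conclude the payoff inequality
    simp only [MPRS.Qsias]
    by_cases hA : (∃ t u, g.play σhat s₀ t = some u ∧ u ∈ g.target n)
    · rw [if_pos hA, if_pos (key hA)]
    · rw [if_neg hA]
      by_cases hB : (∃ t u, g.play σ' s₀ t = some u ∧ u ∈ g.target n)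
      · rw [if_pos hB]; norm_num
      · rw [if_neg hB]
end

section
/- Every two-player reachability/safety game — a qualitative MPRS game with N = 2, player 1 a reacher with nonempty target set R₁, and player 2 an avoider with target set R₂ = R₁ — has a Nash equilibrium in deterministic memoryless strategies: there exists a memoryless deterministic strategy profile σ̂ = (σ̂^1, σ̂^2) such that for every player n ∈ {1,2}, every initial state s₀, and every (possibly history-dependent) deterministic strategy σ^n of player n, Q̃^n(s₀, σ̂^n, σ̂^{-n}) ≥ Q̃^n(s₀, σ^n, σ̂^{-n}), where Q̃^1(s₀,σ) = 1 if the play induced by σ from s₀ contains a state of R₁ and 0 otherwise, and Q̃^2(s₀,σ) = −1 if the play contains a state of R₁ and 0 otherwise. -/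
/-- The qualitative payoff of a two-player reachability/safety game: player `0`
(the reacher) gets `1` if the induced play contains a state of `R₁` and `0`
otherwise; player `1` (the avoider) gets `-1` if the play contains a state of
`R₁` and `0` otherwise.  (Here `R₂ = R₁`.) -/
noncomputable def MPRS.Qtwo {V : Type} [Fintype V] [DecidableEq V]
    (g : MPRS V 2) (n : Fin 2) (s₀ : Option V) (σ : Fin 2 → MPRS.Strat V) : ℝ :=
  @ite ℝ (∃ (t : ℕ) (v : V), g.play σ s₀ t = some v ∧ v ∈ g.target n)
    (Classical.propDecidable _) (if n = 0 then 1 else -1) 0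

namespace MPRSProof

open MPRS Classical

variable {V : Type} [Fintype V] [DecidableEq V]

noncomputable section

/-- One step of the attractor operator for player 0 (the reacher). -/
def attrStep (g : MPRS V 2) (A : Finset V) : Finset V :=
  A ∪ Finset.univ.filter (fun v =>
    (g.owner v = 0 ∧ ∃ w ∈ g.succ v, w ∈ A) ∨ (g.owner v = 1 ∧ ∀ w ∈ g.succ v, w ∈ A))

/-- The attractor hierarchy. -/
def attr (g : MPRS V 2) : ℕ → Finset V
  | 0 => g.totalTarget
  | k+1 => attrStep g (attr g k)

lemma subset_attrStep (g : MPRS V 2) (A : Finset V) : A ⊆ attrStep g A :=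
  Finset.subset_union_left

lemma attr_mono (g : MPRS V 2) : Monotone (attr g) :=
  monotone_nat_of_le_succ (fun k => subset_attrStep g (attr g k))

lemma card_le_attr (g : MPRS V 2) (hne : ∀ k, attr g (k+1) ≠ attr g k) :
    ∀ k, k ≤ (attr g k).card := by
  intro k
  induction k with
  | zero => exact Nat.zero_le _
  | succ k ih =>
    have hss : attr g k ⊂ attr g (k+1) :=
      lt_of_le_of_ne (subset_attrStep g (attr g k)) (fun h => hne k h.symm)
    have := Finset.card_lt_card hss
    omega

lemma exists_stab (g : MPRS V 2) : ∃ k, attr g (k+1) = attr g k := by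
  by_contra hc
  push_neg at hc
  have := card_le_attr g hc (Fintype.card V + 1)
  have hle : (attr g (Fintype.card V + 1)).card ≤ Fintype.card V :=
    Finset.card_le_univ _
  omega

/-- Stabilization index. -/
def K (g : MPRS V 2) : ℕ := Nat.find (exists_stab g)

/-- The winning region of the reacher. -/
def W (g : MPRS V 2) : Finset V := attr g (K g)

lemma attr_stab (g : MPRS V 2) : ∀ m, K g ≤ m → attr g m = W g := by
  intro m hm
  induction m with
  | zero => exact le_antisymm (attr_mono g (Nat.zero_le _)) (Nat.le_zero.mp hm ▸ le_rfl)
  | succ m ih =>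
    rcases Nat.lt_or_ge (K g) (m+1) with h | h
    · have hm' : K g ≤ m := Nat.lt_succ_iff.mp h
      have : attr g m = W g := ih hm'
      show attrStep g (attr g m) = W g
      rw [this]
      show attrStep g (attr g (K g)) = attr g (K g)
      exact Nat.find_spec (exists_stab g)
    · have : K g = m + 1 := le_antisymm hm h
      rw [this.symm]; rfl

lemma attr_subset_W (g : MPRS V 2) (m : ℕ) : attr g m ⊆ W g := by
  rcases le_total m (K g) with h | h
  · exact attr_mono g h
  · rw [attr_stab g m h]

lemma W_fixed (g : MPRS V 2) : attrStep g (W g) = W g := by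
  have := Nat.find_spec (exists_stab g)
  exact this

lemma target_subset_W (g : MPRS V 2) : g.totalTarget ⊆ W g := attr_subset_W g 0

lemma not_W_succ0 {g : MPRS V 2} {v w : V} (hv : v ∉ W g) (ho : g.owner v = 0)
    (hw : w ∈ g.succ v) : w ∉ W g := by
  intro hwW
  apply hv
  rw [← W_fixed g]
  exact Finset.mem_union_right _ (Finset.mem_filter.2 ⟨Finset.mem_univ _,
    Or.inl ⟨ho, w, hw, hwW⟩⟩)

lemma not_W_exists1 {g : MPRS V 2} {v : V} (hv : v ∉ W g) (ho : g.owner v = 1) :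
    ∃ w, w ∈ g.succ v ∧ w ∉ W g := by
  by_contra hc
  push_neg at hc
  apply hv
  rw [← W_fixed g]
  exact Finset.mem_union_right _ (Finset.mem_filter.2 ⟨Finset.mem_univ _,
    Or.inr ⟨ho, hc⟩⟩)

/-- Rank of a vertex in the attractor hierarchy. -/
def rank (g : MPRS V 2) (v : V) : ℕ :=
  if h : ∃ k, v ∈ attr g k then Nat.find h else 0

lemma rank_le {g : MPRS V 2} {v : V} {k : ℕ} (hv : v ∈ attr g k) : rank g v ≤ k := by
  have h : ∃ k, v ∈ attr g k := ⟨k, hv⟩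
  rw [rank, dif_pos h]
  exact Nat.find_le hv

lemma choice0 {g : MPRS V 2} {v : V} (hv : v ∈ W g) (ho : g.owner v = 0)
    (hR : v ∉ g.totalTarget) : ∃ w, w ∈ g.succ v ∧ w ∈ attr g (rank g v - 1) := by
  have h : ∃ k, v ∈ attr g k := ⟨K g, hv⟩
  have hrank : rank g v = Nat.find h := dif_pos h
  have hvmem : v ∈ attr g (Nat.find h) := Nat.find_spec h
  have hne : Nat.find h ≠ 0 := by
    intro h0
    rw [h0] at hvmem
    exact hR hvmem
  obtain ⟨m, hm⟩ := Nat.exists_eq_succ_of_ne_zero hne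
  rw [hm] at hvmem
  have hvnot : v ∉ attr g m := Nat.find_min h (by omega)
  rcases Finset.mem_union.1 hvmem with h' | h'
  · exact absurd h' hvnot
  · rcases (Finset.mem_filter.1 h').2 with ⟨_, w, hw, hwA⟩ | ⟨ho1, _⟩
    · refine ⟨w, hw, ?_⟩
      have : rank g v - 1 = m := by rw [hrank, hm]; omega
      rw [this]; exact hwA
    · rw [ho] at ho1; exact absurd ho1 (by decide)

/-- Memoryless attractor strategy for the reacher. -/
def sig0 (g : MPRS V 2) : Strat V := fun _ v =>
  if h : v ∈ W g ∧ g.owner v = 0 ∧ v ∉ g.totalTarget then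
    Classical.choose (choice0 h.1 h.2.1 h.2.2)
  else Classical.choose (g.succ_nonempty v)

/-- Memoryless trapping strategy for the avoider. -/
def sig1 (g : MPRS V 2) : Strat V := fun _ v =>
  if h : v ∉ W g ∧ g.owner v = 1 then
    Classical.choose (not_W_exists1 h.1 h.2)
  else Classical.choose (g.succ_nonempty v)

lemma sig0_valid (g : MPRS V 2) : g.ValidStrat 0 (sig0 g) := by
  intro h v ho hR
  rw [sig0]
  by_cases hc : v ∈ W g ∧ g.owner v = 0 ∧ v ∉ g.totalTarget
  · rw [dif_pos hc]
    exact (Classical.choose_spec (choice0 hc.1 hc.2.1 hc.2.2)).1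
  · rw [dif_neg hc]
    exact Classical.choose_spec (g.succ_nonempty v)

lemma sig1_valid (g : MPRS V 2) : g.ValidStrat 1 (sig1 g) := by
  intro h v ho hR
  rw [sig1]
  by_cases hc : v ∉ W g ∧ g.owner v = 1
  · rw [dif_pos hc]
    exact (Classical.choose_spec (not_W_exists1 hc.1 hc.2)).1
  · rw [dif_neg hc]
    exact Classical.choose_spec (g.succ_nonempty v)

lemma playAux_none (g : MPRS V 2) (σ : Fin 2 → Strat V) :
    ∀ t h, g.playAux σ t h none = none := by
  intro t
  induction t with
  | zero => intro h; rfl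
  | succ t ih => intro h; show g.playAux σ t _ (g.step σ h none) = none; exact ih _

lemma fin2_cases (n : Fin 2) : n = 0 ∨ n = 1 := by fin_cases n <;> simp

/-- If player 0 follows the attractor strategy, the play from any vertex of the
attractor reaches the target. -/
lemma reach (g : MPRS V 2) (σ : Fin 2 → Strat V) (hσ0 : σ 0 = sig0 g)
    (hσ1 : g.ValidStrat 1 (σ 1)) :
    ∀ (k : ℕ) (v : V), v ∈ attr g k → ∀ h : List (Option V),
      ∃ t u, g.playAux σ t h (some v) = some u ∧ u ∈ g.totalTarget := by
  intro k
  induction k with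
  | zero => intro v hv h; exact ⟨0, v, rfl, hv⟩
  | succ k ih =>
    intro v hv h
    by_cases hR : v ∈ g.totalTarget
    · exact ⟨0, v, rfl, hR⟩
    by_cases hk : v ∈ attr g k
    · exact ih v hk h
    have hvW : v ∈ W g := attr_subset_W g (k+1) hv
    have hstep : g.step σ h (some v) = some (σ (g.owner v) h v) := by
      simp [MPRS.step, hR]
    rcases Finset.mem_union.1 hv with h' | h'
    · exact absurd h' hk
    rcases (Finset.mem_filter.1 h').2 with ⟨ho, _⟩ | ⟨ho, hall⟩
    · -- owner 0: the attractor strategy moves to a lower rank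
      have hcond : v ∈ W g ∧ g.owner v = 0 ∧ v ∉ g.totalTarget := ⟨hvW, ho, hR⟩
      have hval1 : σ (g.owner v) h v = sig0 g h v := by rw [ho, hσ0]
      have hval2 : sig0 g h v = Classical.choose (choice0 hcond.1 hcond.2.1 hcond.2.2) :=
        dif_pos hcond
      have hval : σ (g.owner v) h v = Classical.choose (choice0 hcond.1 hcond.2.1 hcond.2.2) :=
        hval1.trans hval2
      set w := Classical.choose (choice0 hcond.1 hcond.2.1 hcond.2.2) with hw
      have hspec := Classical.choose_spec (choice0 hcond.1 hcond.2.1 hcond.2.2)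
      have hrk : rank g v ≤ k + 1 := rank_le hv
      have hwk : w ∈ attr g k := attr_mono g (by omega : rank g v - 1 ≤ k) hspec.2
      obtain ⟨t, u, hplay, hu⟩ := ih w hwk (h ++ [some v])
      refine ⟨t + 1, u, ?_, hu⟩
      show g.playAux σ t (h ++ [some v]) (g.step σ h (some v)) = some u
      rw [hstep, hval]
      exact hplay
    · -- owner 1: every successor is in the attractor
      have hwsucc : σ (g.owner v) h v ∈ g.succ v := by
        rw [ho]; exact hσ1 h v ho hR
      have hwk : σ (g.owner v) h v ∈ attr g k := hall _ hwsucc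
      obtain ⟨t, u, hplay, hu⟩ := ih _ hwk (h ++ [some v])
      refine ⟨t + 1, u, ?_, hu⟩
      show g.playAux σ t (h ++ [some v]) (g.step σ h (some v)) = some u
      rw [hstep]
      exact hplay

/-- If player 1 follows the trapping strategy, the play from outside the
winning region stays outside it. -/
lemma avoid (g : MPRS V 2) (σ : Fin 2 → Strat V) (hσ1 : σ 1 = sig1 g)
    (hσ0 : g.ValidStrat 0 (σ 0)) :
    ∀ (t : ℕ) (h : List (Option V)) (v : V), v ∉ W g →
      ∀ u, g.playAux σ t h (some v) = some u → u ∉ W g := by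
  intro t
  induction t with
  | zero =>
    intro h v hv u hu
    cases hu
    exact hv
  | succ t ih =>
    intro h v hv u hu
    have hR : v ∉ g.totalTarget := fun hR => hv (target_subset_W g hR)
    have hstep : g.step σ h (some v) = some (σ (g.owner v) h v) := by
      simp [MPRS.step, hR]
    have hu' : g.playAux σ t (h ++ [some v]) (g.step σ h (some v)) = some u := hu
    rw [hstep] at hu'
    rcases fin2_cases (g.owner v) with ho | ho
    · have hwsucc : σ (g.owner v) h v ∈ g.succ v := by
        rw [ho]; exact hσ0 h v ho hR
      exact ih (h ++ [some v]) _ (not_W_succ0 hv ho hwsucc) u hu'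
    · have hcond : v ∉ W g ∧ g.owner v = 1 := ⟨hv, ho⟩
      have hval1 : σ (g.owner v) h v = sig1 g h v := by rw [ho, hσ1]
      have hval2 : sig1 g h v = Classical.choose (not_W_exists1 hcond.1 hcond.2) :=
        dif_pos hcond
      have hval : σ (g.owner v) h v = Classical.choose (not_W_exists1 hcond.1 hcond.2) :=
        hval1.trans hval2
      have hspec := Classical.choose_spec (not_W_exists1 hcond.1 hcond.2)
      rw [hval] at hu'
      exact ih (h ++ [some v]) _ hspec.2 u hu'

end

end MPRSProof

namespace MPRSProof
open MPRS
variable {V : Type} [Fintype V] [DecidableEq V]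
noncomputable section

/-- The equilibrium profile. -/
def sighat (g : MPRS V 2) : Fin 2 → Strat V := fun n => if n = 0 then sig0 g else sig1 g

lemma sighat_zero (g : MPRS V 2) : sighat g 0 = sig0 g := if_pos rfl

lemma sighat_one (g : MPRS V 2) : sighat g 1 = sig1 g := if_neg (by decide)

lemma mem_total_iff (g : MPRS V 2) (htar : g.target 1 = g.target 0) (n : Fin 2) (u : V) :
    u ∈ g.totalTarget ↔ u ∈ g.target n := by
  unfold MPRS.totalTarget
  simp only [Finset.mem_biUnion, Finset.mem_univ, true_and]
  constructor
  · rintro ⟨i, hi⟩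
    rcases fin2_cases i with h | h <;> rcases fin2_cases n with h' | h' <;>
      subst h <;> subst h' <;> simp_all [htar]
  · intro h; exact ⟨n, h⟩

lemma play_none (g : MPRS V 2) (σ : Fin 2 → Strat V) (t : ℕ) :
    g.play σ none t = none := playAux_none g σ t []

end
end MPRSProof

/-- Every two-player reachability/safety game — a qualitative MPRS game with
`N = 2`, player `0` a reacher, player `1` an avoider and `R₂ = R₁` — has a Nash
equilibrium in deterministic memoryless strategies. -/
theorem two_player_reachability_safety_has_memoryless_NE
    {V : Type} [Fintype V] [DecidableEq V] (g : MPRS V 2)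
    (h1 : g.reacher 0 = true) (h2 : g.reacher 1 = false)
    (htar : g.target 1 = g.target 0) :
    ∃ σhat : Fin 2 → MPRS.Strat V,
      (∀ n, g.ValidStrat n (σhat n)) ∧
      (∀ n, MPRS.Memoryless (σhat n)) ∧
      (∀ (n : Fin 2) (s₀ : Option V) (σn : MPRS.Strat V), g.ValidStrat n σn →
        g.Qtwo n s₀ (Function.update σhat n σn) ≤ g.Qtwo n s₀ σhat) := by
  classical
  open MPRSProof in
  refine ⟨sighat g, ?_, ?_, ?_⟩
  · intro n
    rcases fin2_cases n with h | h <;> subst h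
    · rw [sighat_zero]; exact sig0_valid g
    · rw [sighat_one]; exact sig1_valid g
  · intro n
    rcases fin2_cases n with h | h <;> subst h <;> intro h h' v
    · rw [sighat_zero]; rfl
    · rw [sighat_one]; rfl
  · intro n s₀ σn hval
    have hvalid_hat0 : g.ValidStrat 0 (sighat g 0) := by rw [sighat_zero]; exact sig0_valid g
    have hvalid_hat1 : g.ValidStrat 1 (sighat g 1) := by rw [sighat_one]; exact sig1_valid g
    -- bounds on Qtwo
    have hb0 : ∀ τ, (0:ℝ) ≤ g.Qtwo 0 s₀ τ ∧ g.Qtwo 0 s₀ τ ≤ 1 := by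
      intro τ; unfold MPRS.Qtwo
      simp only [show ((0 : Fin 2) = 0) = True by simp, if_true]
      split_ifs <;> norm_num
    have hb1 : ∀ τ, (-1:ℝ) ≤ g.Qtwo 1 s₀ τ ∧ g.Qtwo 1 s₀ τ ≤ 0 := by
      intro τ; unfold MPRS.Qtwo
      simp only [show ((1 : Fin 2) = 0) = False by simp, if_false]
      split_ifs <;> norm_num
    rcases fin2_cases n with h | h <;> subst h
    · -- player 0, the reacher, deviates
      have hupd1 : (Function.update (sighat g) 0 σn) 1 = sig1 g := by
        rw [Function.update_of_ne (by decide), sighat_one]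
      have hupd0 : (Function.update (sighat g) 0 σn) 0 = σn :=
        Function.update_self _ _ _
      cases s₀ with
      | none =>
        have hno : ¬ ∃ (t : ℕ) (v : V),
            g.play (Function.update (sighat g) 0 σn) none t = some v ∧ v ∈ g.target 0 := by
          rintro ⟨t, v, hp, -⟩
          rw [play_none] at hp
          cases hp
        have hL : g.Qtwo 0 none (Function.update (sighat g) 0 σn) = 0 := by
          unfold MPRS.Qtwo; rw [if_neg hno]
        rw [hL]; exact (hb0 _).1
      | some v =>
        by_cases hvW : v ∈ W g
        · -- the hat profile reaches the target
          obtain ⟨t, u, hp, hu⟩ :=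
            reach g (sighat g) (sighat_zero g) hvalid_hat1 (K g) v hvW []
          have hP : ∃ (t : ℕ) (w : V),
              g.play (sighat g) (some v) t = some w ∧ w ∈ g.target 0 :=
            ⟨t, u, hp, (mem_total_iff g htar 0 u).1 hu⟩
          have hR : g.Qtwo 0 (some v) (sighat g) = 1 := by
            unfold MPRS.Qtwo; rw [if_pos hP]; norm_num
          rw [hR]; exact (hb0 _).2
        · -- the deviating play stays outside W, hence never reaches
          have hno : ¬ ∃ (t : ℕ) (w : V),
              g.play (Function.update (sighat g) 0 σn) (some v) t = some w ∧
                w ∈ g.target 0 := by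
            rintro ⟨t, w, hp, hw⟩
            have := avoid g (Function.update (sighat g) 0 σn) hupd1
              (hupd0 ▸ hval) t [] v hvW w hp
            exact this (target_subset_W g ((mem_total_iff g htar 0 w).2 hw))
          have hL : g.Qtwo 0 (some v) (Function.update (sighat g) 0 σn) = 0 := by
            unfold MPRS.Qtwo; rw [if_neg hno]
          rw [hL]; exact (hb0 _).1
    · -- player 1, the avoider, deviates
      have hupd0 : (Function.update (sighat g) 1 σn) 0 = sig0 g := by
        rw [Function.update_of_ne (by decide), sighat_zero]
      have hupd1 : (Function.update (sighat g) 1 σn) 1 = σn :=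
        Function.update_self _ _ _
      cases s₀ with
      | none =>
        have hno : ¬ ∃ (t : ℕ) (v : V),
            g.play (sighat g) none t = some v ∧ v ∈ g.target 1 := by
          rintro ⟨t, v, hp, -⟩
          rw [play_none] at hp
          cases hp
        have hR : g.Qtwo 1 none (sighat g) = 0 := by
          unfold MPRS.Qtwo; rw [if_neg hno]
        rw [hR]; exact (hb1 _).2
      | some v =>
        by_cases hvW : v ∈ W g
        · -- the deviating play still reaches the target
          obtain ⟨t, u, hp, hu⟩ :=
            reach g (Function.update (sighat g) 1 σn) hupd0
              (hupd1 ▸ hval) (K g) v hvW []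
          have hP : ∃ (t : ℕ) (w : V),
              g.play (Function.update (sighat g) 1 σn) (some v) t = some w ∧
                w ∈ g.target 1 :=
            ⟨t, u, hp, (mem_total_iff g htar 1 u).1 hu⟩
          have hL : g.Qtwo 1 (some v) (Function.update (sighat g) 1 σn) = -1 := by
            unfold MPRS.Qtwo; rw [if_pos hP]; norm_num
          rw [hL]; exact (hb1 _).1
        · -- the hat profile never reaches the target
          have hno : ¬ ∃ (t : ℕ) (w : V),
              g.play (sighat g) (some v) t = some w ∧ w ∈ g.target 1 := by
            rintro ⟨t, w, hp, hw⟩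
            have := avoid g (sighat g) (sighat_one g) hvalid_hat0 t [] v hvW w hp
            exact this (target_subset_W g ((mem_total_iff g htar 1 w).2 hw))
          have hR : g.Qtwo 1 (some v) (sighat g) = 0 := by
            unfold MPRS.Qtwo; rw [if_neg hno]
          rw [hR]; exact (hb1 _).2
end
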